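/- arXiv:1201.5992 — 4 statements merged into one kernel-verified Lean document; each statement's English description precedes it below -/
import Mathlib

section
/- Let q = p^h with p an odd prime and h ≥ 1, and let U ⊆ F_q³ be a set of q² − 2 points that does not determine the points of C. If U is not extendable (i.e. there is no v ∈ F_q³ \ U such that U ∪ {v} does not determine the points of C), then h = 1, i.e. q = p. Equivalently: for q = p^h with p an odd prime and h > 1, every set of q² − 2 points of F_q³ not determining the points of C is extendable. -/
/-- The dot product on `F³`. -/
def dot3 {F : Type*} [Field F] (u v : F × F × F) : F :=
  u.1 * v.1 + u.2.1 * v.2.1 + u.2.2 * v.2.2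

/-- The nondegenerate quadratic form `Q(t₀,t₁,t₂) = t₁² − t₀t₂` defining the conic `C`. -/
def quadQ {F : Type*} [Field F] (t : F × F × F) : F :=
  t.2.1 ^ 2 - t.1 * t.2.2

/-- `U` does not determine the points of the conic `C`:
`Q(u − u') ≠ 0` for all distinct `u, u' ∈ U`. -/
def NoDetermine {F : Type*} [Field F] (U : Finset (F × F × F)) : Prop :=
  ∀ u ∈ U, ∀ u' ∈ U, u ≠ u' → quadQ (u - u') ≠ 0

/-- The line at infinity `l(y,z,w)` meets the conic `C`. -/
def MeetsConic {F : Type*} [Field F] (v : F × F × F) : Prop :=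
  ∃ t : F × F × F, t ≠ 0 ∧ quadQ t = 0 ∧ dot3 v t = 0

/-- `σ_i(y,z,w)`: the `i`-th elementary symmetric function of the multiset
`{u·(y,z,w) : u ∈ U}`. -/
def sigmaU {F : Type*} [Field F] (U : Finset (F × F × F)) (v : F × F × F) (i : ℕ) : F :=
  (U.val.map (fun u => dot3 u v)).esymm i

set_option linter.unusedSectionVars false

section Stmt11Aux

open Finset Polynomial

variable {F : Type*} [Field F] [Fintype F] [DecidableEq F]

lemma aux11_poly_zero (f : Polynomial F) (hdeg : f.natDegree < Fintype.card F)
    (h : ∀ x : F, f.eval x = 0) : f = 0 :=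
  f.eq_zero_of_natDegree_lt_card_of_eval_eq_zero' Finset.univ (fun i _ => h i)
    (by simpa using hdeg)

lemma aux11_ext5 (hq : 5 ≤ Fintype.card F) (c0 c1 c2 c3 c4 : F)
    (h : ∀ s : F, c0 + c1*s + c2*s^2 + c3*s^3 + c4*s^4 = 0) :
    c0 = 0 ∧ c1 = 0 ∧ c2 = 0 ∧ c3 = 0 ∧ c4 = 0 := by
  set f : F[X] := C c0 + C c1 * X + C c2 * X^2 + C c3 * X^3 + C c4 * X^4 with hf
  have hdeg : f.natDegree < Fintype.card F := by
    have : f.natDegree ≤ 4 := by rw [hf]; compute_degree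
    omega
  have hz : f = 0 := aux11_poly_zero f hdeg (fun x => by
    simp only [hf, eval_add, eval_mul, eval_pow, eval_C, eval_X]
    exact h x)
  refine ⟨?_, ?_, ?_, ?_, ?_⟩
  · have := congrArg (fun g => Polynomial.coeff g 0) hz
    simpa [hf, coeff_X_pow] using this
  · have := congrArg (fun g => Polynomial.coeff g 1) hz
    simpa [hf, coeff_X_pow] using this
  · have := congrArg (fun g => Polynomial.coeff g 2) hz
    simpa [hf, coeff_X_pow] using this
  · have := congrArg (fun g => Polynomial.coeff g 3) hz
    simpa [hf, coeff_X_pow] using this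
  · have := congrArg (fun g => Polynomial.coeff g 4) hz
    simpa [hf, coeff_X_pow] using this

lemma aux11_extPhi (φ : ℕ) (hφ : 3 ≤ φ) (hq : φ + 2 < Fintype.card F) (k0 k1 k2 k3 : F)
    (h : ∀ b : F, k0 + k1*b + k2*b^φ + k3*b^(φ+1) = 0) : k2 = 0 := by
  set f : F[X] := C k0 + C k1 * X + C k2 * X^φ + C k3 * X^(φ+1) with hf
  have hdeg : f.natDegree < Fintype.card F := by
    have : f.natDegree ≤ φ + 1 := by rw [hf]; compute_degree <;> omega
    omega
  have hz : f = 0 := aux11_poly_zero f hdeg (fun x => by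
    simp only [hf, eval_add, eval_mul, eval_pow, eval_C, eval_X]
    exact h x)
  have hc := congrArg (fun g => Polynomial.coeff g φ) hz
  simp only [hf, coeff_add, coeff_C_mul, coeff_X_pow, coeff_X, coeff_C, coeff_zero,
    mul_ite, mul_one, mul_zero] at hc
  split_ifs at hc <;> first | omega | simp_all | simpa using hc

lemma aux11_extPhi2 (φ : ℕ) (hφ : 3 ≤ φ) (hq : φ + 2 < Fintype.card F) (k0 k1 k2 k3 k4 : F)
    (h : ∀ s : F, k0 + k1*s + k2*s^2 + k3*s^φ + k4*s^(φ+2) = 0) : k1 = 0 := by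
  set f : F[X] := C k0 + C k1 * X + C k2 * X^2 + C k3 * X^φ + C k4 * X^(φ+2) with hf
  have hdeg : f.natDegree < Fintype.card F := by
    have : f.natDegree ≤ φ + 2 := by rw [hf]; compute_degree <;> omega
    omega
  have hz : f = 0 := aux11_poly_zero f hdeg (fun x => by
    simp only [hf, eval_add, eval_mul, eval_pow, eval_C, eval_X]
    exact h x)
  have hc := congrArg (fun g => Polynomial.coeff g 1) hz
  simp only [hf, coeff_add, coeff_C_mul, coeff_X_pow, coeff_X, coeff_C, coeff_zero,
    mul_ite, mul_one, mul_zero] at hc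
  split_ifs at hc <;> first | omega | simp_all | simpa using hc

lemma aux11_sum_lin_pow_eq_zero (hc : (Fintype.card F : F) = 0) (k : ℕ) {a b : F}
    (hab : a ≠ 0 ∨ b ≠ 0) :
    ∑ y : F × F, (a * y.1 + b * y.2)^k = 0 := by
  rw [Fintype.sum_prod_type]
  by_cases hb : b = 0
  · subst hb
    have ha : a ≠ 0 := by tauto
    have : ∀ y1 : F, ∑ _y2 : F, (a * y1 + 0 * _y2)^k = (Fintype.card F : F) * (a*y1)^k := by
      intro y1
      simp [Finset.sum_const, nsmul_eq_mul, Finset.card_univ]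
    rw [Finset.sum_congr rfl (fun y1 _ => this y1)]
    simp [hc]
  · have key : ∀ c : F, ∑ y2 : F, (c + b * y2)^k = ∑ z : F, z^k := by
      intro c
      have := Equiv.sum_comp ((Equiv.mulLeft₀ b hb).trans (Equiv.addLeft c))
        (fun z : F => z^k)
      simpa [Equiv.trans_apply] using this
    have : ∀ y1 : F, ∑ y2 : F, (a * y1 + b * y2)^k = ∑ z : F, z^k := fun y1 => key (a*y1)
    rw [Finset.sum_congr rfl (fun y1 _ => this y1)]
    rw [Finset.sum_const, Finset.card_univ, nsmul_eq_mul, hc, zero_mul]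

lemma aux11_sum_mul_expand (U : Finset (F×F×F)) (c1 c2 c3 d1 d2 d3 : F) :
    ∑ u ∈ U, ((c1*u.1 + c2*u.2.1 + c3*u.2.2) * (d1*u.1 + d2*u.2.1 + d3*u.2.2)) =
      c1*d1 * ∑ u ∈ U, u.1*u.1 + (c1*d2 + c2*d1) * ∑ u ∈ U, u.1*u.2.1
      + (c1*d3 + c3*d1) * ∑ u ∈ U, u.1*u.2.2 + c2*d2 * ∑ u ∈ U, u.2.1*u.2.1
      + (c2*d3 + c3*d2) * ∑ u ∈ U, u.2.1*u.2.2 + c3*d3 * ∑ u ∈ U, u.2.2*u.2.2 := by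
  simp only [Finset.mul_sum, ← Finset.sum_add_distrib]
  exact Finset.sum_congr rfl fun u _ => by ring

lemma aux11_sum_mul_frob_expand (φ : ℕ) (hfrob : ∀ x y : F, (x+y)^φ = x^φ + y^φ)
    (U : Finset (F×F×F)) (c1 c2 c3 d1 d2 d3 : F) :
    ∑ u ∈ U, ((c1*u.1 + c2*u.2.1 + c3*u.2.2) * (d1*u.1 + d2*u.2.1 + d3*u.2.2)^φ) =
      d1^φ*c1 * ∑ u ∈ U, u.1^φ*u.1 + d1^φ*c2 * ∑ u ∈ U, u.1^φ*u.2.1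
    + d1^φ*c3 * ∑ u ∈ U, u.1^φ*u.2.2
    + d2^φ*c1 * ∑ u ∈ U, u.2.1^φ*u.1 + d2^φ*c2 * ∑ u ∈ U, u.2.1^φ*u.2.1
    + d2^φ*c3 * ∑ u ∈ U, u.2.1^φ*u.2.2
    + d3^φ*c1 * ∑ u ∈ U, u.2.2^φ*u.1 + d3^φ*c2 * ∑ u ∈ U, u.2.2^φ*u.2.1
    + d3^φ*c3 * ∑ u ∈ U, u.2.2^φ*u.2.2 := by
  simp only [Finset.mul_sum, ← Finset.sum_add_distrib]
  refine Finset.sum_congr rfl fun u _ => ?_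
  have hx : (d1*u.1 + d2*u.2.1 + d3*u.2.2)^φ
      = d1^φ*u.1^φ + d2^φ*u.2.1^φ + d3^φ*u.2.2^φ := by
    rw [hfrob, hfrob, mul_pow, mul_pow, mul_pow]
  rw [hx]; ring


lemma aux11_dot3_sub (v a b : F × F × F) : dot3 v (a - b) = dot3 v a - dot3 v b := by
  simp only [dot3, Prod.fst_sub, Prod.snd_sub]
  ring

lemma aux11_dot3_mk (c1 c2 c3 : F) (u : F × F × F) :
    dot3 (c1, c2, c3) u = c1*u.1 + c2*u.2.1 + c3*u.2.2 := rfl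

lemma aux11_struct (hc0 : (Fintype.card F : F) = 0) (h2 : (2:F) ≠ 0)
    (U : Finset (F × F × F)) (hU : NoDetermine U)
    (hUcard : U.card = Fintype.card F ^ 2 - 2)
    (hs1 : ∑ u ∈ U, u.1 = 0) (hs2 : ∑ u ∈ U, u.2.1 = 0) (hs3 : ∑ u ∈ U, u.2.2 = 0)
    (v₁ v₂ : F × F × F)
    (hker : ∀ d : F × F × F, dot3 v₁ d = 0 → dot3 v₂ d = 0 → quadQ d = 0) :
    ∃ α β : F, ¬(α = 0 ∧ β = 0) ∧
      (∀ u ∈ U, ¬(dot3 v₁ u = α ∧ dot3 v₂ u = β) ∧ ¬(dot3 v₁ u = -α ∧ dot3 v₂ u = -β)) ∧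
      (∀ k : ℕ, k ≠ 0 → Even k → ∀ a b : F,
        ∑ u ∈ U, (a * dot3 v₁ u + b * dot3 v₂ u)^k = -2*(a*α + b*β)^k) := by
  have hinj : ∀ x ∈ U, ∀ y ∈ U,
      (dot3 v₁ x, dot3 v₂ x) = (dot3 v₁ y, dot3 v₂ y) → x = y := by
    intro x hx y hy hxy
    by_contra hne
    refine hU x hx y hy hne (hker (x - y) ?_ ?_)
    · rw [aux11_dot3_sub]
      rw [Prod.mk.injEq] at hxy
      rw [hxy.1]; ring
    · rw [aux11_dot3_sub]
      rw [Prod.mk.injEq] at hxy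
      rw [hxy.2]; ring
  set Ψ : F × F × F → F × F := fun u => (dot3 v₁ u, dot3 v₂ u) with hΨ
  set T : Finset (F × F) := U.image Ψ with hT
  have hTcard : T.card = Fintype.card F ^ 2 - 2 := by
    rw [hT, Finset.card_image_of_injOn (fun x hx y hy hxy => hinj x hx y hy hxy), hUcard]
  have hq2 : 2 ≤ Fintype.card F := Fintype.one_lt_card
  have hcompl : Tᶜ.card = 2 := by
    rw [Finset.card_compl, hTcard]
    rw [Fintype.card_prod]
    have h1 : Fintype.card F ^ 2 = Fintype.card F * Fintype.card F := sq (Fintype.card F) ▸ by ring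
    rw [← h1]
    have : 2 ≤ Fintype.card F ^ 2 := by nlinarith
    omega
  obtain ⟨pa, pb, hpapb, hTc⟩ := Finset.card_eq_two.mp hcompl
  have hpaT : pa ∉ T := by
    have : pa ∈ Tᶜ := by rw [hTc]; simp
    simpa [Finset.mem_compl] using this
  have hpbT : pb ∉ T := by
    have : pb ∈ Tᶜ := by rw [hTc]; simp
    simpa [Finset.mem_compl] using this
  have hmem : ∀ u ∈ U, Ψ u ≠ pa ∧ Ψ u ≠ pb := by
    intro u hu
    constructor
    · intro he; exact hpaT (he ▸ Finset.mem_image_of_mem Ψ hu)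
    · intro he; exact hpbT (he ▸ Finset.mem_image_of_mem Ψ hu)
  have key : ∀ (k : ℕ) (a b : F), (a ≠ 0 ∨ b ≠ 0) →
      ∑ u ∈ U, (a * dot3 v₁ u + b * dot3 v₂ u)^k
        = -((a*pa.1 + b*pa.2)^k) - (a*pb.1+b*pb.2)^k := by
    intro k a b hab
    have h1 : ∑ u ∈ U, (a * dot3 v₁ u + b * dot3 v₂ u)^k
        = ∑ y ∈ T, (a*y.1 + b*y.2)^k := by
      rw [hT, Finset.sum_image hinj]
    have h2' : (∑ y ∈ T, (a*y.1 + b*y.2)^k) + ∑ y ∈ Tᶜ, (a*y.1 + b*y.2)^k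
        = ∑ y : F × F, (a*y.1 + b*y.2)^k :=
      Finset.sum_add_sum_compl T _
    rw [aux11_sum_lin_pow_eq_zero hc0 k hab] at h2'
    have h3 : ∑ y ∈ Tᶜ, (a*y.1+b*y.2)^k = (a*pa.1+b*pa.2)^k + (a*pb.1+b*pb.2)^k := by
      rw [hTc]; exact Finset.sum_pair hpapb
    rw [h3] at h2'
    rw [h1]
    linear_combination h2'
  have hsum0 : ∀ w : F × F × F, ∑ u ∈ U, dot3 w u = 0 := by
    intro w
    simp only [dot3]
    rw [Finset.sum_add_distrib, Finset.sum_add_distrib, ← Finset.mul_sum, ← Finset.mul_sum,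
      ← Finset.mul_sum, hs1, hs2, hs3]
    ring
  have e1 := key 1 1 0 (Or.inl one_ne_zero)
  have e2 := key 1 0 1 (Or.inr one_ne_zero)
  simp only [one_mul, zero_mul, add_zero, zero_add, pow_one] at e1 e2
  rw [hsum0 v₁] at e1
  rw [hsum0 v₂] at e2
  have hb1 : pb.1 = -pa.1 := by linear_combination e1
  have hb2 : pb.2 = -pa.2 := by linear_combination e2
  refine ⟨pa.1, pa.2, ?_, ?_, ?_⟩
  · rintro ⟨ha, hb⟩
    apply hpapb
    have : pb = (0, 0) := by
      apply Prod.ext <;> simp [hb1, hb2, ha, hb]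
    rw [this]
    apply Prod.ext <;> simp [ha, hb]
  · intro u hu
    obtain ⟨hA, hB⟩ := hmem u hu
    constructor
    · rintro ⟨h1', h2'⟩
      exact hA (by rw [hΨ]; simp only; rw [h1', h2'])
    · rintro ⟨h1', h2'⟩
      refine hB ?_
      rw [hΨ]; simp only; rw [h1', h2']
      apply Prod.ext <;> simp [hb1, hb2]
  · intro k hk0 hke a b
    by_cases hab : a = 0 ∧ b = 0
    · obtain ⟨rfl, rfl⟩ := hab
      simp [zero_pow hk0]
    · have hab' : a ≠ 0 ∨ b ≠ 0 := by tauto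
      rw [key k a b hab']
      have : a*pb.1 + b*pb.2 = -(a*pa.1 + b*pa.2) := by rw [hb1, hb2]; ring
      rw [this, hke.neg_pow]
      ring


end Stmt11Aux

set_option maxHeartbeats 4000000

theorem stmt_11 {p h : ℕ} (hp : p.Prime) (hodd : Odd p) (hh : 1 < h)
    {F : Type*} [Field F] [Fintype F] [DecidableEq F]
    (hcard : Fintype.card F = p ^ h)
    (U : Finset (F × F × F))
    (hUcard : U.card = Fintype.card F ^ 2 - 2)
    (hU : NoDetermine U) :
    ∃ v : F × F × F, v ∉ U ∧ NoDetermine (insert v U) := by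
  classical
  haveI hCR : CharP F (ringChar F) := ringChar.charP F
  obtain ⟨n, hcprime, hcn⟩ := FiniteField.card F (ringChar F)
  have hpc : p = ringChar F := by
    have hdvd : p ∣ (ringChar F) ^ (n:ℕ) := by
      rw [← hcn, hcard]
      exact dvd_pow_self p (by omega)
    exact (Nat.prime_dvd_prime_iff_eq hp hcprime).mp (hp.dvd_of_dvd_pow hdvd)
  haveI : CharP F p := by rw [hpc]; exact hCR
  haveI : Fact p.Prime := ⟨hp⟩
  have hp3 : 3 ≤ p := by
    obtain ⟨m', hm'⟩ := hodd
    have := hp.two_le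
    omega
  have h2 : (2:F) ≠ 0 := Ring.two_ne_zero (by omega)
  have hc0 : (Fintype.card F : F) = 0 := by
    rw [hcard]
    push_cast
    rw [CharP.cast_eq_zero F p]
    exact zero_pow (by omega)
  have hq9 : 9 ≤ Fintype.card F := by
    rw [hcard]
    calc (9:ℕ) = 3^2 := by norm_num
    _ ≤ p^2 := Nat.pow_le_pow_left hp3 2
    _ ≤ p^h := Nat.pow_le_pow_right (by omega) hh
  set φ := p ^ (h - 1) with hφdef
  have hφ3 : 3 ≤ φ := le_trans hp3 (Nat.le_self_pow (by omega) p)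
  have hφodd : Odd φ := hodd.pow
  have hφq : φ + 2 < Fintype.card F := by
    rw [hcard]
    have hx : p ^ h = φ * p := by
      rw [hφdef, ← pow_succ]
      congr 1
      omega
    have hφ3' : 3 ≤ φ := hφ3
    nlinarith
  have hq5 : 5 ≤ Fintype.card F := by omega
  have hfrob : ∀ x y : F, (x + y)^φ = x^φ + y^φ := fun x y => by
    rw [hφdef]; exact add_pow_char_pow x y p (h-1)
  have hnegφ : ∀ x : F, (-x)^φ = -(x^φ) := fun x => Odd.neg_pow hφodd x
  have hφe : Even (φ + 1) := hφodd.add_one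
  have hφne : φ + 1 ≠ 0 := by omega
  -- translation so that the sum of the points is zero
  set S1 := ∑ u ∈ U, u.1 with hS1
  set S2 := ∑ u ∈ U, u.2.1 with hS2
  set S3 := ∑ u ∈ U, u.2.2 with hS3
  set m : F × F × F := ((2:F)⁻¹ * S1, (2:F)⁻¹ * S2, (2:F)⁻¹ * S3) with hm
  set W : Finset (F×F×F) := U.image (fun u => u + m) with hW
  have hinjm : Function.Injective (fun u : F×F×F => u + m) := fun x y hxy => by
    simpa using congrArg (fun z => z - m) hxy
  have hWcard : W.card = Fintype.card F ^ 2 - 2 := by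
    rw [hW, Finset.card_image_of_injective _ hinjm, hUcard]
  have hWnd : NoDetermine W := by
    intro x hx y hy hxy
    obtain ⟨u, hu, rfl⟩ := Finset.mem_image.mp hx
    obtain ⟨u', hu', rfl⟩ := Finset.mem_image.mp hy
    have hne : u ≠ u' := fun hcc => hxy (by rw [hcc])
    have heq : u + m - (u' + m) = u - u' := by abel
    rw [heq]
    exact hU u hu u' hu' hne
  have hcast2 : ((Fintype.card F ^ 2 - 2 : ℕ) : F) = -2 := by
    have h2q : 2 ≤ Fintype.card F ^ 2 := by nlinarith
    rw [Nat.cast_sub h2q]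
    push_cast
    rw [hc0]
    ring
  have hWs1 : ∑ u ∈ W, u.1 = 0 := by
    rw [hW, Finset.sum_image (fun x _ y _ hxy => hinjm hxy)]
    simp only [Prod.fst_add]
    rw [Finset.sum_add_distrib, Finset.sum_const, ← hS1, nsmul_eq_mul, hUcard, hcast2]
    show S1 + -2 * ((2:F)⁻¹ * S1) = 0
    field_simp
    ring
  have hWs2 : ∑ u ∈ W, u.2.1 = 0 := by
    rw [hW, Finset.sum_image (fun x _ y _ hxy => hinjm hxy)]
    simp only [Prod.snd_add, Prod.fst_add]
    rw [Finset.sum_add_distrib, Finset.sum_const, ← hS2, nsmul_eq_mul, hUcard, hcast2]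
    show S2 + -2 * ((2:F)⁻¹ * S2) = 0
    field_simp
    ring
  have hWs3 : ∑ u ∈ W, u.2.2 = 0 := by
    rw [hW, Finset.sum_image (fun x _ y _ hxy => hinjm hxy)]
    simp only [Prod.snd_add]
    rw [Finset.sum_add_distrib, Finset.sum_const, ← hS3, nsmul_eq_mul, hUcard, hcast2]
    show S3 + -2 * ((2:F)⁻¹ * S3) = 0
    field_simp
    ring
  -- it suffices to find an extension point for W
  suffices hsuff : ∃ v : F × F × F, v ∉ W ∧ NoDetermine (insert v W) by
    obtain ⟨v', hv'W, hv'nd⟩ := hsuff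
    refine ⟨v' - m, ?_, ?_⟩
    · intro hvU
      exact hv'W (by
        rw [hW, Finset.mem_image]
        exact ⟨v' - m, hvU, by abel⟩)
    · intro x hx y hy hxy
      rw [Finset.mem_insert] at hx hy
      have hmap : ∀ z : F × F × F, z ∈ insert (v' - m) U → z + m ∈ insert v' W := by
        intro z hz
        rw [Finset.mem_insert] at hz
        rcases hz with rfl | hz
        · have hvm : v' - m + m = v' := by abel
          rw [hvm]
          exact Finset.mem_insert_self _ _
        · exact Finset.mem_insert_of_mem (by
            rw [hW, Finset.mem_image]; exact ⟨z, hz, rfl⟩)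
      have heq : x + m - (y + m) = x - y := by abel
      have hne' : x + m ≠ y + m := fun hcc => hxy (hinjm hcc)
      have := hv'nd (x + m) (hmap x (Finset.mem_insert.mpr hx)) (y + m)
        (hmap y (Finset.mem_insert.mpr hy)) hne'
      rw [heq] at this
      exact this
  -- families of conic directions
  have hkerS : ∀ s : F, ∀ d : F×F×F,
      dot3 (s^2, (0:F), (-1:F)) d = 0 → dot3 (-s, (1:F), (0:F)) d = 0 → quadQ d = 0 := by
    intro s d hd1 hd2
    simp only [dot3] at hd1 hd2
    simp only [quadQ]
    linear_combination (d.2.1 + s*d.1) * hd2 + d.1 * hd1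
  have hkerI : ∀ d : F×F×F,
      dot3 ((1:F), (0:F), (0:F)) d = 0 → dot3 ((0:F), (1:F), (0:F)) d = 0 → quadQ d = 0 := by
    intro d hd1 hd2
    simp only [dot3] at hd1 hd2
    simp only [quadQ]
    linear_combination d.2.1 * hd2 - d.2.2 * hd1
  choose α β hab0 hR1 hR2 using fun s : F =>
    aux11_struct hc0 h2 W hWnd hWcard hWs1 hWs2 hWs3 (s^2, 0, -1) (-s, 1, 0) (hkerS s)
  obtain ⟨αI, βI, habI, hR1I, hR2I⟩ :=
    aux11_struct hc0 h2 W hWnd hWcard hWs1 hWs2 hWs3 (1,0,0) (0,1,0) hkerI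
  -- quadratic coefficient sums
  set g00 := ∑ u ∈ W, u.1*u.1 with hg00
  set g01 := ∑ u ∈ W, u.1*u.2.1 with hg01
  set g02 := ∑ u ∈ W, u.1*u.2.2 with hg02
  set g11 := ∑ u ∈ W, u.2.1*u.2.1 with hg11
  set g12 := ∑ u ∈ W, u.2.1*u.2.2 with hg12
  set g22 := ∑ u ∈ W, u.2.2*u.2.2 with hg22
  have hE1 : ∀ s : F, s^4*g00 - 2*(s^2*g02) + g22 = -2*(α s)^2 := by
    intro s
    have hk := hR2 s 2 two_ne_zero even_two 1 0
    have hL : ∑ u ∈ W, (1 * dot3 (s^2, (0:F), (-1:F)) u + 0 * dot3 (-s, (1:F), (0:F)) u)^2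
        = ∑ u ∈ W, ((s^2*u.1 + 0*u.2.1 + (-1)*u.2.2) * (s^2*u.1 + 0*u.2.1 + (-1)*u.2.2)) := by
      refine Finset.sum_congr rfl fun u _ => ?_
      show (1 * (s^2*u.1 + 0*u.2.1 + (-1)*u.2.2) + 0 * ((-s)*u.1 + 1*u.2.1 + 0*u.2.2))^2 = _
      ring
    rw [hL, aux11_sum_mul_expand] at hk
    linear_combination hk
  have hE2 : ∀ s : F, s^2*g00 - 2*(s*g01) + g11 = -2*(β s)^2 := by
    intro s
    have hk := hR2 s 2 two_ne_zero even_two 0 1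
    have hL : ∑ u ∈ W, (0 * dot3 (s^2, (0:F), (-1:F)) u + 1 * dot3 (-s, (1:F), (0:F)) u)^2
        = ∑ u ∈ W, (((-s)*u.1 + 1*u.2.1 + 0*u.2.2) * ((-s)*u.1 + 1*u.2.1 + 0*u.2.2)) := by
      refine Finset.sum_congr rfl fun u _ => ?_
      show (0 * (s^2*u.1 + 0*u.2.1 + (-1)*u.2.2) + 1 * ((-s)*u.1 + 1*u.2.1 + 0*u.2.2))^2 = _
      ring
    rw [hL, aux11_sum_mul_expand] at hk
    linear_combination hk
  have hE3 : ∀ s : F, 2*(s^2*g01 + s*g02 - s^3*g00 - g12) = -4*(α s)*(β s) := by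
    intro s
    have hk := hR2 s 2 two_ne_zero even_two 1 1
    have hL : ∑ u ∈ W, (1 * dot3 (s^2, (0:F), (-1:F)) u + 1 * dot3 (-s, (1:F), (0:F)) u)^2
        = ∑ u ∈ W, (((s^2-s)*u.1 + 1*u.2.1 + (-1)*u.2.2) * ((s^2-s)*u.1 + 1*u.2.1 + (-1)*u.2.2)) := by
      refine Finset.sum_congr rfl fun u _ => ?_
      show (1 * (s^2*u.1 + 0*u.2.1 + (-1)*u.2.2) + 1 * ((-s)*u.1 + 1*u.2.1 + 0*u.2.2))^2 = _
      ring
    rw [hL, aux11_sum_mul_expand] at hk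
    linear_combination hk - hE1 s - hE2 s
  -- the degree-4 identity and its coefficients
  have hE : ∀ s : F, (4*(g11*g22) - 4*(g12*g12)) + (8*(g02*g12) - 8*(g01*g22))*s
      + (4*(g00*g22) + 8*(g01*g12) - 8*(g02*g11) - 4*(g02*g02))*s^2
      + (8*(g01*g02) - 8*(g00*g12))*s^3 + (4*(g00*g11) - 4*(g01*g01))*s^4 = 0 := by
    intro s
    linear_combination (4*(s^2*g00 - 2*(s*g01) + g11)) * (hE1 s)
      + (-8*(α s)^2) * (hE2 s)
      + (-(2*(s^2*g01 + s*g02 - s^3*g00 - g12) - 4*(α s)*(β s))) * (hE3 s)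
  obtain ⟨hh0, hh1, hh2, hh3, hh4⟩ := aux11_ext5 hq5 _ _ _ _ _ hE
  have h4 : (4:F) ≠ 0 := by
    have h24 : (4:F) = 2*2 := by norm_num
    rw [h24]
    exact mul_ne_zero h2 h2
  have h8 : (8:F) ≠ 0 := by
    have h28 : (8:F) = 2*4 := by norm_num
    rw [h28]
    exact mul_ne_zero h2 h4
  have cancel4 : ∀ x : F, (4:F) * x = 0 → x = 0 := fun x hx =>
    (mul_eq_zero.mp hx).resolve_left h4
  have cancel8 : ∀ x : F, (8:F) * x = 0 → x = 0 := fun x hx =>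
    (mul_eq_zero.mp hx).resolve_left h8
  have hH00 : g11*g22 - g12*g12 = 0 := cancel4 _ (by linear_combination hh0)
  have hH01 : g02*g12 - g01*g22 = 0 := cancel8 _ (by linear_combination hh1)
  have hH12 : g01*g02 - g00*g12 = 0 := cancel8 _ (by linear_combination hh3)
  have hH22 : g00*g11 - g01*g01 = 0 := cancel4 _ (by linear_combination hh4)
  have hHmix : (g00*g22 - g02*g02) + 2*(g01*g12 - g02*g11) = 0 :=
    cancel4 _ (by linear_combination hh2)
  by_cases hlam : g00*g22 - g02*g02 = 0
  ·
    -- good branch: produce the extension point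
    have hH02 : g01*g12 - g02*g11 = 0 := by
      have hx : (2:F)*(g01*g12 - g02*g11) = 0 := by linear_combination hHmix - hlam
      exact (mul_eq_zero.mp hx).resolve_left h2
    have hA0 : g22 = -2*(α 0)^2 := by linear_combination hE1 0
    have hB0 : g11 = -2*(β 0)^2 := by linear_combination hE2 0
    have he12 : g12 = 2*((α 0)*(β 0)) := by
      have hx : (2:F)*(g12 - 2*((α 0)*(β 0))) = 0 := by linear_combination -(hE3 0)
      have := (mul_eq_zero.mp hx).resolve_left h2
      linear_combination this
    obtain ⟨r0, r1, r2, e00, e01, e02, e11, e12, e22⟩ :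
        ∃ r0 r1 r2 : F, g00 = -2*(r0*r0) ∧ g01 = -2*(r0*r1) ∧ g02 = -2*(r0*r2)
          ∧ g11 = -2*(r1*r1) ∧ g12 = -2*(r1*r2) ∧ g22 = -2*(r2*r2) := by
      by_cases hb0 : β 0 = 0
      · have ha0 : α 0 ≠ 0 := fun hz => hab0 0 ⟨hz, hb0⟩
        have hg11z : g11 = 0 := by rw [hB0, hb0]; ring
        have hg01z : g01 = 0 := by
          have hx : g01*g01 = 0 := by linear_combination g00*hg11z - hH22
          exact mul_self_eq_zero.mp hx
        have hg12z : g12 = 0 := by rw [he12, hb0]; ring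
        refine ⟨g02/(2*(α 0)), β 0, -(α 0), ?_, ?_, ?_, ?_, ?_, ?_⟩
        · field_simp
          linear_combination g00*hA0 - hlam
        · rw [hg01z, hb0]; ring
        · field_simp
        · rw [hg11z, hb0]; ring
        · rw [hg12z, hb0]; ring
        · rw [hA0]; ring
      · refine ⟨-g01/(2*(β 0)), β 0, -(α 0), ?_, ?_, ?_, ?_, ?_, ?_⟩
        · field_simp
          linear_combination g00*hB0 - hH22
        · field_simp
        · have hxy : g02*(β 0) + g01*(α 0) = 0 := by
            have hx : (2:F)*((g02*(β 0) + g01*(α 0))*(β 0)) = 0 := by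
              linear_combination g02*hB0 - g01*he12 + hH02
            exact (mul_eq_zero.mp ((mul_eq_zero.mp hx).resolve_left h2)).resolve_right hb0
          field_simp
          linear_combination hxy
        · rw [hB0]; ring
        · rw [he12]; ring
        · rw [hA0]; ring
    -- the matching lemma
    have hmatch : ∀ (c1 c2 c3 d1 d2 d3 aa bb : F),
        (∀ a b : F, ∑ u ∈ W,
            (a * dot3 (c1, c2, c3) u + b * dot3 (d1, d2, d3) u)^2
          = -2*(a*aa + b*bb)^2) →
        ((c1*r0 + c2*r1 + c3*r2 = aa ∧ d1*r0 + d2*r1 + d3*r2 = bb)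
          ∨ (c1*r0 + c2*r1 + c3*r2 = -aa ∧ d1*r0 + d2*r1 + d3*r2 = -bb)) := by
      intro c1 c2 c3 d1 d2 d3 aa bb hRR
      simp only [aux11_dot3_mk] at hRR
      have h1 := hRR 1 0
      have hL1 : ∑ u ∈ W, ((1:F) * (c1*u.1 + c2*u.2.1 + c3*u.2.2)
            + 0 * (d1*u.1 + d2*u.2.1 + d3*u.2.2))^2
          = ∑ u ∈ W, ((c1*u.1 + c2*u.2.1 + c3*u.2.2) * (c1*u.1 + c2*u.2.1 + c3*u.2.2)) :=
        Finset.sum_congr rfl fun u _ => by ring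
      rw [hL1, aux11_sum_mul_expand] at h1
      have hAA : aa^2 = (c1*r0 + c2*r1 + c3*r2)^2 := by
        have h2x : (-2:F)*aa^2 = -2*(c1*r0 + c2*r1 + c3*r2)^2 := by
          linear_combination (-1)*h1 + (c1*c1)*e00 + (2*(c1*c2))*e01 + (2*(c1*c3))*e02
            + (c2*c2)*e11 + (2*(c2*c3))*e12 + (c3*c3)*e22
        exact mul_left_cancel₀ (neg_ne_zero.mpr h2) h2x
      have h1' := hRR 0 1
      have hL2 : ∑ u ∈ W, ((0:F) * (c1*u.1 + c2*u.2.1 + c3*u.2.2)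
            + 1 * (d1*u.1 + d2*u.2.1 + d3*u.2.2))^2
          = ∑ u ∈ W, ((d1*u.1 + d2*u.2.1 + d3*u.2.2) * (d1*u.1 + d2*u.2.1 + d3*u.2.2)) :=
        Finset.sum_congr rfl fun u _ => by ring
      rw [hL2, aux11_sum_mul_expand] at h1'
      have hBB : bb^2 = (d1*r0 + d2*r1 + d3*r2)^2 := by
        have h2x : (-2:F)*bb^2 = -2*(d1*r0 + d2*r1 + d3*r2)^2 := by
          linear_combination (-1)*h1' + (d1*d1)*e00 + (2*(d1*d2))*e01 + (2*(d1*d3))*e02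
            + (d2*d2)*e11 + (2*(d2*d3))*e12 + (d3*d3)*e22
        exact mul_left_cancel₀ (neg_ne_zero.mpr h2) h2x
      have h1'' := hRR 1 1
      have hL3 : ∑ u ∈ W, ((1:F) * (c1*u.1 + c2*u.2.1 + c3*u.2.2)
            + 1 * (d1*u.1 + d2*u.2.1 + d3*u.2.2))^2
          = ∑ u ∈ W, (((c1+d1)*u.1 + (c2+d2)*u.2.1 + (c3+d3)*u.2.2)
            * ((c1+d1)*u.1 + (c2+d2)*u.2.1 + (c3+d3)*u.2.2)) :=
        Finset.sum_congr rfl fun u _ => by ring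
      rw [hL3, aux11_sum_mul_expand] at h1''
      have hAB : aa*bb = (c1*r0 + c2*r1 + c3*r2)*(d1*r0 + d2*r1 + d3*r2) := by
        have h2x : (-4:F)*(aa*bb) = -4*((c1*r0 + c2*r1 + c3*r2)*(d1*r0 + d2*r1 + d3*r2)) := by
          linear_combination (-1)*h1'' + h1 + h1'
            + ((c1+d1)*(c1+d1) - c1*c1 - d1*d1)*e00
            + (2*((c1+d1)*(c2+d2)) - 2*(c1*c2) - 2*(d1*d2))*e01
            + (2*((c1+d1)*(c3+d3)) - 2*(c1*c3) - 2*(d1*d3))*e02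
            + ((c2+d2)*(c2+d2) - c2*c2 - d2*d2)*e11
            + (2*((c2+d2)*(c3+d3)) - 2*(c2*c3) - 2*(d2*d3))*e12
            + ((c3+d3)*(c3+d3) - c3*c3 - d3*d3)*e22
        have h4' : (-4:F) ≠ 0 := neg_ne_zero.mpr h4
        exact mul_left_cancel₀ h4' h2x
      by_cases hA0 : c1*r0 + c2*r1 + c3*r2 = 0
      · have haa : aa = 0 := by
          have : aa^2 = 0 := by rw [hAA, hA0]; ring
          exact pow_eq_zero_iff (two_ne_zero) |>.mp this
        have hfac : (bb - (d1*r0 + d2*r1 + d3*r2))*(bb + (d1*r0 + d2*r1 + d3*r2)) = 0 := by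
          linear_combination hBB
        rcases mul_eq_zero.mp hfac with hc | hc
        · left
          exact ⟨by rw [hA0, haa], by linear_combination -hc⟩
        · right
          exact ⟨by rw [hA0, haa]; ring, by linear_combination hc⟩
      · have hfac : ((c1*r0 + c2*r1 + c3*r2) - aa)*((c1*r0 + c2*r1 + c3*r2) + aa) = 0 := by
          linear_combination -hAA
        rcases mul_eq_zero.mp hfac with hc | hc
        · left
          have haa : c1*r0 + c2*r1 + c3*r2 = aa := by linear_combination hc
          refine ⟨haa, ?_⟩
          have hx : (c1*r0 + c2*r1 + c3*r2)*(d1*r0 + d2*r1 + d3*r2)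
              = (c1*r0 + c2*r1 + c3*r2)*bb := by
            rw [← hAB, haa]
          exact mul_left_cancel₀ hA0 hx
        · right
          have haa : c1*r0 + c2*r1 + c3*r2 = -aa := by linear_combination hc
          refine ⟨haa, ?_⟩
          have hx : (c1*r0 + c2*r1 + c3*r2)*(d1*r0 + d2*r1 + d3*r2)
              = (c1*r0 + c2*r1 + c3*r2)*(-bb) := by
            rw [← hAB, haa]; ring
          exact mul_left_cancel₀ hA0 hx
    -- the extension point
    set rv : F × F × F := (r0, r1, r2) with hrv
    have hmatchS : ∀ s : F,
        ((s^2*r0 + 0*r1 + (-1)*r2 = α s ∧ (-s)*r0 + 1*r1 + 0*r2 = β s)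
          ∨ (s^2*r0 + 0*r1 + (-1)*r2 = -(α s) ∧ (-s)*r0 + 1*r1 + 0*r2 = -(β s))) := by
      intro s
      exact hmatch (s^2) 0 (-1) (-s) 1 0 (α s) (β s)
        (fun a b => hR2 s 2 (by norm_num) even_two a b)
    have hmatchI :
        ((1*r0 + 0*r1 + 0*r2 = αI ∧ 0*r0 + 1*r1 + 0*r2 = βI)
          ∨ (1*r0 + 0*r1 + 0*r2 = -αI ∧ 0*r0 + 1*r1 + 0*r2 = -βI)) :=
      hmatch 1 0 0 0 1 0 αI βI (fun a b => hR2I 2 two_ne_zero even_two a b)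
    have hrnotW : rv ∉ W := by
      intro hrW
      rcases hmatchS 0 with ⟨hA, hB⟩ | ⟨hA, hB⟩
      · exact (hR1 0 rv hrW).1 ⟨hA, hB⟩
      · exact (hR1 0 rv hrW).2 ⟨hA, hB⟩
    have hqr : ∀ u ∈ W, quadQ (rv - u) ≠ 0 := by
      intro u hu hq0
      have hq0' : (r1 - u.2.1)^2 - (r0 - u.1)*(r2 - u.2.2) = 0 := hq0
      by_cases hd1 : r0 - u.1 = 0
      · have hd21 : r1 - u.2.1 = 0 := by
          have hx : (r1 - u.2.1)^2 = 0 := by linear_combination hq0' + (r2 - u.2.2)*hd1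
          exact pow_eq_zero_iff (two_ne_zero) |>.mp hx
        rcases hmatchI with ⟨hA, hB⟩ | ⟨hA, hB⟩
        · refine (hR1I u hu).1 ⟨?_, ?_⟩
          · show 1*u.1 + 0*u.2.1 + 0*u.2.2 = αI
            linear_combination hA - hd1
          · show 0*u.1 + 1*u.2.1 + 0*u.2.2 = βI
            linear_combination hB - hd21
        · refine (hR1I u hu).2 ⟨?_, ?_⟩
          · show 1*u.1 + 0*u.2.1 + 0*u.2.2 = -αI
            linear_combination hA - hd1
          · show 0*u.1 + 1*u.2.1 + 0*u.2.2 = -βI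
            linear_combination hB - hd21
      · set s : F := (r1 - u.2.1) / (r0 - u.1) with hs
        have hv1 : s^2*(r0 - u.1) - (r2 - u.2.2) = 0 := by
          rw [hs]
          field_simp
          linear_combination hq0'
        have hv2 : (-s)*(r0 - u.1) + (r1 - u.2.1) = 0 := by
          rw [hs]
          field_simp
          ring
        rcases hmatchS s with ⟨hA, hB⟩ | ⟨hA, hB⟩
        · refine (hR1 s u hu).1 ⟨?_, ?_⟩
          · show s^2*u.1 + 0*u.2.1 + (-1)*u.2.2 = α s
            linear_combination hA - hv1
          · show (-s)*u.1 + 1*u.2.1 + 0*u.2.2 = β s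
            linear_combination hB - hv2
        · refine (hR1 s u hu).2 ⟨?_, ?_⟩
          · show s^2*u.1 + 0*u.2.1 + (-1)*u.2.2 = -(α s)
            linear_combination hA - hv1
          · show (-s)*u.1 + 1*u.2.1 + 0*u.2.2 = -(β s)
            linear_combination hB - hv2
    refine ⟨rv, hrnotW, ?_⟩
    have hqneg : ∀ z : F×F×F, quadQ (-z) = quadQ z := by
      intro z
      show (-z).2.1^2 - (-z).1*(-z).2.2 = z.2.1^2 - z.1*z.2.2
      simp only [Prod.fst_neg, Prod.snd_neg]
      ring
    intro x hx y hy hxy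
    rw [Finset.mem_insert] at hx hy
    rcases hx with rfl | hxW
    · rcases hy with rfl | hyW
      · exact absurd rfl hxy
      · exact hqr y hyW
    · rcases hy with rfl | hyW
      · have hxy' : x - rv = -(rv - x) := by abel
        rw [hxy', hqneg]
        exact hqr x hxW
      · exact hWnd x hxW y hyW hxy
  · -- bad branch: contradiction
    exfalso
    have hkey : g00 * (g01*g12 - g02*g11) = 0 := by
      linear_combination (-g01) * hH12 + (-g02) * hH22
    have hg00z : g00 = 0 := by
      rcases mul_eq_zero.mp hkey with hzz | hzz
      · exact hzz
      · exact absurd (by linear_combination hHmix - 2*hzz) hlam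
    have hg01z : g01 = 0 := by
      have hx : g01*g01 = 0 := by linear_combination g11*hg00z - hH22
      exact mul_self_eq_zero.mp hx
    have hg02ne : g02 ≠ 0 := by
      intro hz
      apply hlam
      rw [hg00z, hz]
      ring
    have hg12z : g12 = 0 := by
      have hx : g02*g12 = 0 := by linear_combination hH01 + g22*hg01z
      exact (mul_eq_zero.mp hx).resolve_left hg02ne
    have hg11v : 2*g11 = -g02 := by
      have hx : g02*(g02 + 2*g11) = 0 := by
        linear_combination -hHmix + g22*hg00z + 2*g12*hg01z
      have := (mul_eq_zero.mp hx).resolve_left hg02ne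
      linear_combination this
    have hbeta2 : ∀ s : F, 4*(β s)^2 = g02 := by
      intro s
      linear_combination 2*(hE2 s) - hg11v - 2*s^2*hg00z + 4*s*hg01z
    have hab2 : ∀ s : F, 4*(α s)*(β s) = -2*s*g02 := by
      intro s
      linear_combination hE3 s - 2*s^2*hg01z + 2*s^3*hg00z + 2*hg12z
    obtain ⟨t, ht⟩ := hφodd
    have hbpow : ∀ x : F, x^φ = (x^2)^t * x := by
      intro x
      rw [ht, pow_succ, pow_mul]
    set n00 := ∑ u ∈ W, u.1^φ*u.1 with hn00
    set n02 := ∑ u ∈ W, u.1^φ*u.2.2 with hn02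
    set n10 := ∑ u ∈ W, u.2.1^φ*u.1 with hn10
    set n12 := ∑ u ∈ W, u.2.1^φ*u.2.2 with hn12
    have hK2 : ∀ s : F,
        (∑ u ∈ W, ((s^2*u.1 + 0*u.2.1 + (-1)*u.2.2) * ((-s)*u.1 + 1*u.2.1 + 0*u.2.2)^φ))
          = -2*((α s)*(β s)^φ) := by
      intro s
      have hmain : ∀ bb : F,
          ((∑ u ∈ W, ((s^2*u.1 + 0*u.2.1 + (-1)*u.2.2)^φ*(s^2*u.1 + 0*u.2.1 + (-1)*u.2.2)))
            + 2*((α s)^φ*(α s)))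
          + ((∑ u ∈ W, ((s^2*u.1 + 0*u.2.1 + (-1)*u.2.2)^φ*((-s)*u.1 + 1*u.2.1 + 0*u.2.2)))
            + 2*((α s)^φ*(β s)))*bb
          + ((∑ u ∈ W, ((s^2*u.1 + 0*u.2.1 + (-1)*u.2.2)*((-s)*u.1 + 1*u.2.1 + 0*u.2.2)^φ))
            + 2*((α s)*(β s)^φ))*bb^φ
          + ((∑ u ∈ W, (((-s)*u.1 + 1*u.2.1 + 0*u.2.2)^φ*((-s)*u.1 + 1*u.2.1 + 0*u.2.2)))
            + 2*((β s)^φ*(β s)))*bb^(φ+1) = 0 := by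
        intro bb
        have hk := hR2 s (φ+1) hφne hφe 1 bb
        have hpt : ∀ u : F×F×F,
            (1 * dot3 (s^2, (0:F), (-1:F)) u + bb * dot3 (-s, (1:F), (0:F)) u)^(φ+1)
            = ((s^2*u.1 + 0*u.2.1 + (-1)*u.2.2)^φ*(s^2*u.1 + 0*u.2.1 + (-1)*u.2.2))
              + ((s^2*u.1 + 0*u.2.1 + (-1)*u.2.2)^φ*((-s)*u.1 + 1*u.2.1 + 0*u.2.2))*bb
              + ((s^2*u.1 + 0*u.2.1 + (-1)*u.2.2)*((-s)*u.1 + 1*u.2.1 + 0*u.2.2)^φ)*bb^φ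
              + (((-s)*u.1 + 1*u.2.1 + 0*u.2.2)^φ*((-s)*u.1 + 1*u.2.1 + 0*u.2.2))*bb^(φ+1) := by
          intro u
          show (1 * (s^2*u.1 + 0*u.2.1 + (-1)*u.2.2) + bb * ((-s)*u.1 + 1*u.2.1 + 0*u.2.2))^(φ+1) = _
          have e1 : ((s^2*u.1 + 0*u.2.1 + (-1)*u.2.2) + bb * ((-s)*u.1 + 1*u.2.1 + 0*u.2.2))^φ
              = (s^2*u.1 + 0*u.2.1 + (-1)*u.2.2)^φ + bb^φ * ((-s)*u.1 + 1*u.2.1 + 0*u.2.2)^φ := by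
            rw [hfrob, mul_pow]
          rw [one_mul, pow_succ, e1]
          ring
        rw [Finset.sum_congr rfl (fun u _ => hpt u)] at hk
        rw [Finset.sum_add_distrib, Finset.sum_add_distrib, Finset.sum_add_distrib,
          ← Finset.sum_mul, ← Finset.sum_mul, ← Finset.sum_mul] at hk
        have hsc : ((1:F)*(α s) + bb*(β s))^(φ+1)
            = ((α s)^φ*(α s)) + ((α s)^φ*(β s))*bb + ((α s)*(β s)^φ)*bb^φ
              + ((β s)^φ*(β s))*bb^(φ+1) := by
          have e1 : ((α s) + bb*(β s))^φ = (α s)^φ + bb^φ*(β s)^φ := by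
            rw [hfrob, mul_pow]
          rw [one_mul, pow_succ, e1]
          ring
        rw [hsc] at hk
        linear_combination hk
      have := aux11_extPhi φ hφ3 hφq _ _ _ _ hmain
      linear_combination this
    have hstep : ∀ s : F, 2*(4:F)^(t+1)*((α s)*(β s)^φ) = -4*s*g02^(t+1) := by
      intro s
      have e1 : 2*(4:F)^(t+1)*((α s)*(β s)^φ) = 2*(((4:F)*(β s)^2)^t)*(4*(α s)*(β s)) := by
        rw [hbpow (β s), mul_pow]
        ring
      rw [e1, hbeta2 s, hab2 s]
      ring
    have hzφ : (0:F)^φ = 0 := zero_pow (by omega)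
    have hfin : ∀ s : F, (-((4:F)^(t+1)*n12)) + (-(4*g02^(t+1)))*s + ((4:F)^(t+1)*n10)*s^2
        + ((4:F)^(t+1)*n02)*s^φ + (-((4:F)^(t+1)*n00))*s^(φ+2) = 0 := by
      intro s
      have hsum := aux11_sum_mul_frob_expand φ hfrob W (s^2) 0 (-1) (-s) 1 0
      rw [hnegφ s, one_pow, hzφ] at hsum
      linear_combination (-(4:F)^(t+1))*hsum + (4:F)^(t+1)*(hK2 s) - hstep s
    have hk1 := aux11_extPhi2 φ hφ3 hφq _ _ _ _ _ hfin
    have hgp : g02^(t+1) = 0 := cancel4 _ (by linear_combination -hk1)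
    exact hg02ne (pow_eq_zero_iff (by omega : t+1 ≠ 0) |>.mp hgp)
end

section
/- Let U ⊆ F_q³ be a set of q² − 2 points that does not determine the points of C, with ∑_{u∈U} u = (0,0,0). Then for every (y,z,w) ∈ F_q³ one has the identity in F_q[X]: ∑_{u∈U} (X + u·(y,z,w))^{q−1} = −2 · ∑_{k=0}^{(q−1)/2} σ₂(y,z,w)^k · X^{q−1−2k}. -/
open Polynomial

section Prelim
variable {F : Type*} [Field F] [Fintype F]

/-- char facts packaged -/
lemma char_facts {p h : ℕ} (hp : p.Prime) (hodd : Odd p) (hh : 1 ≤ h)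
    (hcard : Fintype.card F = p ^ h) : CharP F p ∧ (2 : F) ≠ 0 := by
  obtain ⟨n, hn⟩ := FiniteField.card F (ringChar F)
  have hrc : (ringChar F).Prime := hn.1
  have : p ∣ ringChar F := by
    have h1 : p ∣ p ^ h := dvd_pow_self p (by omega)
    rw [← hcard, hn.2] at h1
    exact hp.dvd_of_dvd_pow h1
  have hpr : ringChar F = p := ((Nat.prime_dvd_prime_iff_eq hp hrc).1 this).symm
  have hc : CharP F p := hpr ▸ ringChar.charP F
  refine ⟨hc, ?_⟩
  have hne : ¬ (p ∣ 2) := by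
    intro h2
    have := (Nat.prime_dvd_prime_iff_eq hp Nat.prime_two).1 h2
    rw [this] at hodd
    exact (Nat.not_odd_iff_even.mpr even_two) hodd
  intro h0
  exact hne ((CharP.cast_eq_zero_iff F p 2).1 (by exact_mod_cast h0))

lemma sum_univ_id_eq_zero (h2 : (2:F) ≠ 0) : ∑ a : F, a = 0 := by
  have h : ∑ a : F, a = ∑ a : F, -a :=
    Fintype.sum_bijective (fun a : F => -a) neg_involutive.bijective _ _ (fun x => rfl) |>.symm
    |>.trans (by simp)
  have : (2:F) * ∑ a : F, a = 0 := by
    rw [two_mul]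
    nth_rewrite 2 [h]
    rw [← Finset.sum_add_distrib]; simp
  exact (mul_eq_zero.mp this).resolve_left h2

lemma choose_cast {p hh : ℕ} (hp : p.Prime) [CharP F p]
    (hcard : Fintype.card F = p ^ hh) :
    ∀ m, m ≤ Fintype.card F - 1 → ((Nat.choose (Fintype.card F - 1) m : ℕ) : F) = (-1)^m := by
  intro m
  induction m with
  | zero => intro _; simp
  | succ m ih =>
    intro hm
    have hq1 : 1 ≤ Fintype.card F := Fintype.card_pos
    have hpascal : Nat.choose (Fintype.card F) (m+1)
        = Nat.choose (Fintype.card F - 1) m + Nat.choose (Fintype.card F - 1) (m+1) := by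
      have : Fintype.card F = (Fintype.card F - 1) + 1 := by omega
      conv_lhs => rw [this]
      rw [Nat.choose_succ_succ]
    have hdvd : p ∣ Nat.choose (Fintype.card F) (m+1) := by
      rw [hcard]
      exact hp.dvd_choose_pow (by omega) (by rw [← hcard]; omega)
    have hcast : ((Nat.choose (Fintype.card F) (m+1) : ℕ) : F) = 0 :=
      (CharP.cast_eq_zero_iff F p _).2 hdvd
    rw [hpascal] at hcast
    push_cast at hcast
    have := ih (by omega)
    rw [this] at hcast
    rw [pow_succ]
    linear_combination hcast
end Prelim


section Dot
variable {F : Type*} [Field F]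

lemma dot3_comm (u v : F×F×F) : dot3 u v = dot3 v u := by unfold dot3; ring

lemma dot3_sub_left (u u' w : F×F×F) : dot3 (u - u') w = dot3 u w - dot3 u' w := by
  unfold dot3; simp [Prod.fst_sub, Prod.snd_sub]; ring

lemma dot3_add_left (u u' w : F×F×F) : dot3 (u + u') w = dot3 u w + dot3 u' w := by
  unfold dot3; simp [Prod.fst_add, Prod.snd_add]; ring

lemma dot3_smul_left (l : F) (u w : F×F×F) : dot3 (l • u) w = l * dot3 u w := by
  unfold dot3; simp [Prod.smul_fst, Prod.smul_snd, smul_eq_mul]; ring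

lemma dot3_zero_left (w : F×F×F) : dot3 0 w = 0 := by unfold dot3; simp

lemma dot3_add_right (u v w : F×F×F) : dot3 u (v + w) = dot3 u v + dot3 u w := by
  unfold dot3; simp [Prod.fst_add, Prod.snd_add]; ring

lemma dot3_smul_right (l : F) (u w : F×F×F) : dot3 u (l • w) = l * dot3 u w := by
  unfold dot3; simp [Prod.smul_fst, Prod.smul_snd, smul_eq_mul]; ring

lemma dot3_zero_right (w : F×F×F) : dot3 w 0 = 0 := by unfold dot3; simp

lemma quadQ_smul (l : F) (t : F×F×F) : quadQ (l • t) = l^2 * quadQ t := by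
  unfold quadQ; simp [Prod.smul_fst, Prod.smul_snd, smul_eq_mul]; ring

lemma dot3_sum_left {ι : Type*} (s : Finset ι) (f : ι → F×F×F) (w : F×F×F) :
    dot3 (∑ i ∈ s, f i) w = ∑ i ∈ s, dot3 (f i) w := by
  induction s using Finset.cons_induction with
  | empty => simp [dot3_zero_left]
  | cons a s ha ih => rw [Finset.sum_cons, Finset.sum_cons, dot3_add_left, ih]
end Dot

section Esymm
variable {F : Type*} [CommRing F]

lemma esymm_cons_two (a : F) (s : Multiset F) :
    (a ::ₘ s).esymm 2 = a * s.sum + s.esymm 2 := by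
  rw [Multiset.esymm, show (2:ℕ) = 1 + 1 from rfl, Multiset.powersetCard_cons,
    Multiset.map_add, Multiset.sum_add, Multiset.map_map]
  have h1 : (Multiset.map (Multiset.prod ∘ Multiset.cons a) (s.powersetCard 1)).sum
      = a * s.sum := by
    have : (Multiset.prod ∘ Multiset.cons a) = (fun t : Multiset F => a * t.prod) :=
      funext fun t => by simp [Multiset.prod_cons]
    rw [this, Multiset.sum_map_mul_left, Multiset.powersetCard_one, Multiset.map_map]
    simp
  rw [h1, Multiset.esymm]
  ring
lemma two_mul_esymm_two (s : Multiset F) :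
    2 * s.esymm 2 = s.sum ^ 2 - (s.map (fun a => a^2)).sum := by
  induction s using Multiset.induction_on with
  | empty => simp [Multiset.esymm]; rw [Multiset.powersetCard_eq_empty 2 (by simp)]; simp
  | cons a s ih =>
    rw [esymm_cons_two, Multiset.sum_cons, Multiset.map_cons, Multiset.sum_cons]
    ring_nf
    ring_nf at ih
    linear_combination ih
end Esymm

section Grid
variable {F : Type*} [Field F] [Fintype F]

lemma sum_univ_id_eq_zero' (h2 : (2:F) ≠ 0) : ∑ a : F, a = 0 := by
  have h : ∑ a : F, a = ∑ a : F, -a :=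
    (Fintype.sum_bijective (fun a : F => -a) neg_involutive.bijective _ _ (fun x => rfl)).symm.trans
      (by simp)
  have h3 : (2:F) * ∑ a : F, a = 0 := by
    rw [two_mul]
    nth_rewrite 2 [h]
    rw [← Finset.sum_add_distrib]; simp
  exact (mul_eq_zero.mp h3).resolve_left h2

lemma sum_affine_subst (a b : F) (ha : a ≠ 0) (g : F → F) :
    ∑ x : F, g (a * x + b) = ∑ z : F, g z := by
  apply Fintype.sum_bijective (fun x : F => a * x + b)
  · constructor
    · intro x y hxy
      simp only at hxy
      exact mul_left_cancel₀ ha (add_right_cancel hxy)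
    · intro z; exact ⟨(z - b)/a, by field_simp; ring⟩
  · intro x; rfl

lemma grid0 (hq : (Fintype.card F : F) = 0) (c : F × F) (i : ℕ) :
    ∑ ξ : F × F, (c.1 * ξ.1 + c.2 * ξ.2)^i = 0 := by
  rcases eq_or_ne c.1 0 with hc1 | hc1
  · rcases eq_or_ne c.2 0 with hc2 | hc2
    · simp only [hc1, hc2, zero_mul, add_zero]
      rcases Nat.eq_zero_or_pos i with hi | hi
      · subst hi; simp [Finset.card_univ, Fintype.card_prod, hq]
      · simp [zero_pow (by omega : i ≠ 0)]
    · rw [Fintype.sum_prod_type]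
      have inner : ∀ x : F, ∑ y : F, (c.1 * x + c.2 * y)^i = ∑ z : F, z^i := by
        intro x
        simp only [hc1, zero_mul, zero_add]
        simpa using sum_affine_subst c.2 0 hc2 (fun z => z^i)
      rw [Finset.sum_congr rfl (fun x _ => inner x), Finset.sum_const, Finset.card_univ,
        nsmul_eq_mul, hq, zero_mul]
  · rw [Fintype.sum_prod_type_right]
    have inner : ∀ y : F, ∑ x : F, (c.1 * x + c.2 * y)^i = ∑ z : F, z^i := fun y =>
      sum_affine_subst c.1 (c.2*y) hc1 (fun z => z^i)
    rw [Finset.sum_congr rfl (fun y _ => inner y), Finset.sum_const, Finset.card_univ,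
      nsmul_eq_mul, hq, zero_mul]

lemma grid1 (h2 : (2:F) ≠ 0) (hq : (Fintype.card F : F) = 0) (c e : F × F) (i : ℕ) :
    ∑ ξ : F × F, (c.1 * ξ.1 + c.2 * ξ.2)^i * (e.1 * ξ.1 + e.2 * ξ.2) = 0 := by
  have hs0 : ∑ a : F, a = 0 := sum_univ_id_eq_zero' h2
  rcases eq_or_ne c.1 0 with hc1 | hc1
  · rcases eq_or_ne c.2 0 with hc2 | hc2
    · rcases Nat.eq_zero_or_pos i with hi | hi
      · subst hi
        simp only [pow_zero, one_mul]
        rw [Fintype.sum_prod_type]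
        have inner : ∀ x : F, ∑ y : F, (e.1 * x + e.2 * y) = (Fintype.card F : F) * (e.1 * x) := by
          intro x
          rw [Finset.sum_add_distrib, Finset.sum_const, Finset.card_univ, ← Finset.mul_sum, hs0,
            mul_zero, add_zero, nsmul_eq_mul]
        rw [Finset.sum_congr rfl (fun x _ => inner x), ← Finset.mul_sum, hq, zero_mul]
      · simp [hc1, hc2, zero_pow (by omega : i ≠ 0)]
    · rw [Fintype.sum_prod_type_right]
      have inner : ∀ y : F, ∑ x : F, (c.1 * x + c.2 * y)^i * (e.1 * x + e.2 * y) = 0 := by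
        intro y
        simp only [hc1, zero_mul, zero_add]
        rw [← Finset.mul_sum, Finset.sum_add_distrib, ← Finset.mul_sum, hs0, mul_zero, zero_add,
          Finset.sum_const, Finset.card_univ, nsmul_eq_mul, hq, zero_mul, mul_zero]
      rw [Finset.sum_congr rfl (fun y _ => inner y), Finset.sum_const]
      simp
  · rw [Fintype.sum_prod_type_right]
    set lam := e.1/c.1 with hlam
    set mu := e.2 - e.1*c.2/c.1 with hmu
    have inner : ∀ y : F, ∑ x : F, (c.1 * x + c.2 * y)^i * (e.1 * x + e.2 * y)
        = lam * (∑ z : F, z^(i+1)) + (mu * (∑ z : F, z^i)) * y := by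
      intro y
      have key : ∀ x : F, (c.1 * x + c.2 * y)^i * (e.1 * x + e.2 * y)
          = (fun z => z^i * (lam * z + mu * y)) (c.1 * x + c.2 * y) := by
        intro x
        simp only [hlam, hmu]
        field_simp
        ring
      rw [Finset.sum_congr rfl (fun x _ => key x),
        sum_affine_subst c.1 (c.2*y) hc1 (fun z => z^i * (lam * z + mu * y))]
      
      have expand : ∀ z : F, z^i * (lam * z + mu * y) = lam * z^(i+1) + (mu * y) * z^i :=
        fun z => by ring
      rw [Finset.sum_congr rfl (fun z _ => expand z), Finset.sum_add_distrib,
        ← Finset.mul_sum, ← Finset.mul_sum]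
      ring
    rw [Finset.sum_congr rfl (fun y _ => inner y), Finset.sum_add_distrib,
      Finset.sum_const, Finset.card_univ, nsmul_eq_mul, hq, zero_mul, zero_add,
      ← Finset.mul_sum, hs0, mul_zero]
end Grid

section Planes
variable {F : Type*} [Field F]

/-- cone directions indexed by Option F -/
def tvec : Option F → F × F × F
  | none => (0, 0, 1)
  | some s => (1, s, s * s)

def wvec1 : Option F → F × F × F
  | none => (1, 0, 0)
  | some s => (s * s, -(2*s), 1)

def wvec2 : Option F → F × F × F
  | none => (0, 1, 0)
  | some s => (-s, 1, 0)

lemma quadQ_tvec (i : Option F) : quadQ (tvec i) = 0 := by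
  cases i <;> simp [tvec, quadQ] <;> ring

lemma dot3_wvec1_tvec (i : Option F) : dot3 (wvec1 i) (tvec i) = 0 := by
  cases i <;> simp [tvec, wvec1, dot3] <;> ring

lemma dot3_wvec2_tvec (i : Option F) : dot3 (wvec2 i) (tvec i) = 0 := by
  cases i <;> simp [tvec, wvec2, dot3] <;> ring

lemma tvec_ker (i : Option F) (x : F×F×F) (h1 : dot3 x (wvec1 i) = 0)
    (h2 : dot3 x (wvec2 i) = 0) : ∃ l : F, x = l • tvec i := by
  obtain ⟨x1, x2, x3⟩ := x
  cases i with
  | none =>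
    simp [dot3, wvec1, wvec2] at h1 h2
    exact ⟨x3, by simp [tvec, Prod.ext_iff, h1, h2]⟩
  | some s =>
    simp only [dot3, wvec1, wvec2] at h1 h2
    refine ⟨x1, ?_⟩
    have hx2 : x2 = x1 * s := by linear_combination h2
    have hx3 : x3 = x1 * (s * s) := by linear_combination h1 + (2*s) * h2
    simp [tvec, Prod.ext_iff, smul_eq_mul, hx2, hx3]

lemma tvec_span (i : Option F) (x : F×F×F) (hx : dot3 x (tvec i) = 0) :
    ∃ c : F × F, ∀ u : F×F×F, dot3 u x = c.1 * dot3 u (wvec1 i) + c.2 * dot3 u (wvec2 i) := by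
  obtain ⟨x1, x2, x3⟩ := x
  cases i with
  | none =>
    simp only [dot3, tvec] at hx
    refine ⟨(x1, x2), fun u => ?_⟩
    simp only [dot3, wvec1, wvec2]
    linear_combination u.2.2 * hx
  | some s =>
    simp only [dot3, tvec] at hx
    refine ⟨(x3, x2 + 2*x3*s), fun u => ?_⟩
    simp only [dot3, wvec1, wvec2]
    linear_combination u.1 * hx

lemma tvec_indep (i i' : Option F) (hne : i ≠ i') (l : F) : tvec i ≠ l • tvec i' := by
  intro h
  have h1 := congrArg Prod.fst h
  have h2 := congrArg (fun z : F×F×F => z.2.1) h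
  have h3 := congrArg (fun z : F×F×F => z.2.2) h
  simp only [Prod.smul_fst, Prod.smul_snd, smul_eq_mul] at h1 h2 h3
  cases i with
  | none => cases i' with
    | none => exact hne rfl
    | some s =>
      simp only [tvec] at h1 h2 h3
      have hl : l = 0 := by linear_combination -h1
      rw [hl, zero_mul] at h3
      exact one_ne_zero h3
  | some s => cases i' with
    | none =>
      simp only [tvec] at h1
      simpa using h1
    | some s' =>
      simp only [tvec] at h1 h2 h3
      rw [mul_one] at h1
      rw [← h1, one_mul] at h2
      exact hne (by rw [h2])

lemma tvec_three (i₁ i₂ i₃ : Option F) (h12 : i₁ ≠ i₂) (h13 : i₁ ≠ i₃) (h23 : i₂ ≠ i₃)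
    (x : F×F×F) (e1 : dot3 x (tvec i₁) = 0) (e2 : dot3 x (tvec i₂) = 0)
    (e3 : dot3 x (tvec i₃) = 0) : x = 0 := by
  obtain ⟨x1, x2, x3⟩ := x
  have pair : ∀ s s' : F, s ≠ s' → dot3 (x1,x2,x3) (tvec (some s)) = 0 →
      dot3 (x1,x2,x3) (tvec (some s')) = 0 → x2 = -(x3*(s+s')) ∧ x1 = x3*(s*s') := by
    intro s s' hss hs hs'
    simp only [dot3, tvec] at hs hs'
    have h2 : x2 + x3 * (s + s') = 0 := by
      have hne : s - s' ≠ 0 := sub_ne_zero.mpr hss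
      have hm : (s - s') * (x2 + x3 * (s + s')) = 0 := by linear_combination hs - hs'
      exact (mul_eq_zero.mp hm).resolve_left hne
    have hx2 : x2 = -(x3*(s+s')) := by linear_combination h2
    refine ⟨hx2, ?_⟩
    rw [hx2] at hs
    linear_combination hs
  have fin2 : ∀ s s' : F, s ≠ s' → x3 = 0 → dot3 (x1,x2,x3) (tvec (some s)) = 0 →
      dot3 (x1,x2,x3) (tvec (some s')) = 0 → (x1,x2,x3) = (0 : F×F×F) := by
    intro s s' hss hx3 hs hs'
    simp only [dot3, tvec, hx3] at hs hs'
    have hx2 : x2 = 0 := by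
      have hm : x2 * (s - s') = 0 := by linear_combination hs - hs'
      exact (mul_eq_zero.mp hm).resolve_right (sub_ne_zero.mpr hss)
    have hx1 : x1 = 0 := by rw [hx2] at hs; linear_combination hs
    simp [hx1, hx2, hx3, Prod.ext_iff]
  have hz : ∀ i : Option F, i = none → dot3 (x1,x2,x3) (tvec i) = 0 → x3 = 0 := by
    intro i hi hd
    subst hi
    simp only [dot3, tvec] at hd
    linear_combination hd
  match i₁, i₂, i₃, h12, h13, h23, e1, e2, e3 with
  | none, none, _, h12, _, _, _, _, _ => exact absurd rfl h12
  | some _, none, none, _, _, h23, _, _, _ => exact absurd rfl h23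
  | none, some s, some s', _, _, h23, e1, e2, e3 =>
    exact fin2 s s' (fun h => h23 (congrArg Option.some h)) (hz none rfl e1) e2 e3
  | some s, none, some s', _, h13, _, e1, e2, e3 =>
    exact fin2 s s' (fun h => h13 (congrArg Option.some h)) (hz none rfl e2) e1 e3
  | some s, some s', none, h12, _, _, e1, e2, e3 =>
    exact fin2 s s' (fun h => h12 (congrArg Option.some h)) (hz none rfl e3) e1 e2
  | some s₁, some s₂, some s₃, h12, h13, h23, e1, e2, e3 =>
    have p12 := pair s₁ s₂ (fun h => h12 (congrArg Option.some h)) e1 e2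
    have p13 := pair s₁ s₃ (fun h => h13 (congrArg Option.some h)) e1 e3
    have hx3 : x3 = 0 := by
      have hm : x3 * (s₂ - s₃) = 0 := by linear_combination p12.1 - p13.1
      exact (mul_eq_zero.mp hm).resolve_right
        (sub_ne_zero.mpr (fun h => h23 (congrArg Option.some h)))
    exact fin2 s₁ s₂ (fun h => h12 (congrArg Option.some h)) hx3 e1 e2
end Planes


section PlaneSum
variable {F : Type*} [Field F] [Fintype F] [DecidableEq F]

lemma plane_sum
    (hq : (Fintype.card F : F) = 0) (hq2 : 2 ≤ Fintype.card F)
    (U : Finset (F×F×F)) (hUcard : U.card = Fintype.card F ^ 2 - 2)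
    (hU : NoDetermine U) (hsum : ∑ u ∈ U, u = 0)
    (t w₁ w₂ : F×F×F) (hQ : quadQ t = 0)
    (hker : ∀ x : F×F×F, dot3 x w₁ = 0 → dot3 x w₂ = 0 → ∃ l : F, x = l • t) :
    ∃ m : F × F, m ≠ -m ∧ ∀ f : F × F → F,
      ∑ u ∈ U, f (dot3 u w₁, dot3 u w₂) = (∑ ξ : F × F, f ξ) - f m - f (-m) := by
  classical
  set Φ : (F×F×F) → F × F := fun u => (dot3 u w₁, dot3 u w₂) with hΦ
  have hinj : ∀ x ∈ U, ∀ y ∈ U, Φ x = Φ y → x = y := by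
    intro u hu u' hu' h
    by_contra hne
    have h1 : dot3 (u - u') w₁ = 0 := by
      rw [dot3_sub_left, sub_eq_zero]; exact congrArg Prod.fst h
    have h2 : dot3 (u - u') w₂ = 0 := by
      rw [dot3_sub_left, sub_eq_zero]; exact congrArg Prod.snd h
    obtain ⟨l, hl⟩ := hker _ h1 h2
    exact hU u hu u' hu' hne (by rw [hl, quadQ_smul, hQ, mul_zero])
  set V := U.image Φ with hV
  have hVcard : V.card = Fintype.card F ^ 2 - 2 := by
    rw [hV, Finset.card_image_of_injOn hinj, hUcard]
  set K := (Finset.univ : Finset (F × F)) \ V with hK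
  have hcardFF : (Finset.univ : Finset (F × F)).card = Fintype.card F ^ 2 := by
    rw [Finset.card_univ, Fintype.card_prod]; ring
  have hKcard : K.card = 2 := by
    rw [hK, Finset.card_sdiff_of_subset (Finset.subset_univ V), hcardFF, hVcard]
    have : 2 ≤ Fintype.card F ^ 2 := by nlinarith
    omega
  have hVsum : ∑ ξ ∈ V, ξ = 0 := by
    rw [hV, Finset.sum_image hinj]
    have : ∑ u ∈ U, Φ u = (∑ u ∈ U, dot3 u w₁, ∑ u ∈ U, dot3 u w₂) := by
      rw [Prod.ext_iff]
      simp [Prod.fst_sum, Prod.snd_sum, hΦ]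
    rw [this, ← dot3_sum_left, ← dot3_sum_left, hsum, dot3_zero_left, dot3_zero_left]
    rfl
  have huniv_sum : ∑ ξ : F × F, ξ = (0 : F × F) := by
    rw [Prod.ext_iff]
    constructor
    · rw [Prod.fst_sum, Fintype.sum_prod_type]
      have : ∀ x : F, ∑ _y : F, (x, _y).1 = (Fintype.card F : F) * x := by
        intro x
        rw [Finset.sum_const, Finset.card_univ, nsmul_eq_mul]
      rw [Finset.sum_congr rfl (fun x _ => this x)]
      rw [← Finset.mul_sum, hq, zero_mul]
      rfl
    · rw [Prod.snd_sum, Fintype.sum_prod_type]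
      simp only []
      rw [Finset.sum_const, Finset.card_univ, nsmul_eq_mul, hq, zero_mul]
      rfl
  have hKsum : ∑ ξ ∈ K, ξ = 0 := by
    have := Finset.sum_sdiff (Finset.subset_univ V) (f := fun ξ : F × F => ξ)
    rw [hVsum, add_zero] at this
    rw [hK, this, huniv_sum]
  obtain ⟨m, m', hmm', hKeq⟩ := Finset.card_eq_two.mp hKcard
  have hm' : m' = -m := by
    have : m + m' = 0 := by
      rw [hKeq, Finset.sum_pair hmm'] at hKsum; exact hKsum
    linear_combination this
  refine ⟨m, by rw [← hm']; exact fun h => hmm' h, fun f => ?_⟩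
  have h1 : ∑ u ∈ U, f (Φ u) = ∑ ξ ∈ V, f ξ := (Finset.sum_image hinj).symm
  have h2 : ∑ ξ ∈ K, f ξ + ∑ ξ ∈ V, f ξ = ∑ ξ : F × F, f ξ :=
    Finset.sum_sdiff (Finset.subset_univ V)
  have h3 : ∑ ξ ∈ K, f ξ = f m + f (-m) := by
    rw [hKeq, Finset.sum_pair hmm', hm']
  calc ∑ u ∈ U, f (dot3 u w₁, dot3 u w₂) = ∑ ξ ∈ V, f ξ := h1
    _ = (∑ ξ : F × F, f ξ) - f m - f (-m) := by
        rw [← h2, h3]; ring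
end PlaneSum

section Moments
variable {F : Type*} [Field F] [Fintype F] [DecidableEq F]

/-- moment of a single functional through a plane -/
lemma plane_M1
    (hq : (Fintype.card F : F) = 0)
    (U : Finset (F×F×F)) (w₁ w₂ : F×F×F) (m : F × F)
    (hm : ∀ f : F × F → F,
      ∑ u ∈ U, f (dot3 u w₁, dot3 u w₂) = (∑ ξ : F × F, f ξ) - f m - f (-m))
    (x : F×F×F) (c : F × F)
    (hx : ∀ u : F×F×F, dot3 u x = c.1 * dot3 u w₁ + c.2 * dot3 u w₂) (j : ℕ) :
    ∑ u ∈ U, (dot3 u x)^j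
      = -(c.1 * m.1 + c.2 * m.2)^j - (-(c.1 * m.1 + c.2 * m.2))^j := by
  have h := hm (fun ξ => (c.1 * ξ.1 + c.2 * ξ.2)^j)
  simp only at h
  have hL : ∑ u ∈ U, (c.1 * dot3 u w₁ + c.2 * dot3 u w₂)^j = ∑ u ∈ U, (dot3 u x)^j :=
    Finset.sum_congr rfl (fun u _ => by rw [hx u])
  rw [hL] at h
  rw [h, grid0 hq c j]
  have : c.1 * (-m).1 + c.2 * (-m).2 = -(c.1 * m.1 + c.2 * m.2) := by
    simp [Prod.fst_neg, Prod.snd_neg]; ring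
  rw [this]
  ring

/-- mixed moment of two functionals through a plane -/
lemma plane_M2
    (h2 : (2:F) ≠ 0) (hq : (Fintype.card F : F) = 0)
    (U : Finset (F×F×F)) (w₁ w₂ : F×F×F) (m : F × F)
    (hm : ∀ f : F × F → F,
      ∑ u ∈ U, f (dot3 u w₁, dot3 u w₂) = (∑ ξ : F × F, f ξ) - f m - f (-m))
    (x : F×F×F) (c : F × F)
    (hx : ∀ u : F×F×F, dot3 u x = c.1 * dot3 u w₁ + c.2 * dot3 u w₂)
    (d : F×F×F) (e : F × F)
    (hd : ∀ u : F×F×F, dot3 u d = e.1 * dot3 u w₁ + e.2 * dot3 u w₂) (i : ℕ) :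
    ∑ u ∈ U, (dot3 u x)^i * (dot3 u d)
      = -(c.1 * m.1 + c.2 * m.2)^i * (e.1 * m.1 + e.2 * m.2)
        - (-(c.1 * m.1 + c.2 * m.2))^i * (-(e.1 * m.1 + e.2 * m.2)) := by
  have h := hm (fun ξ => (c.1 * ξ.1 + c.2 * ξ.2)^i * (e.1 * ξ.1 + e.2 * ξ.2))
  simp only at h
  have hL : ∑ u ∈ U, (c.1 * dot3 u w₁ + c.2 * dot3 u w₂)^i * (e.1 * dot3 u w₁ + e.2 * dot3 u w₂)
      = ∑ u ∈ U, (dot3 u x)^i * (dot3 u d) :=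
    Finset.sum_congr rfl (fun u _ => by rw [hx u, hd u])
  rw [hL] at h
  rw [h, grid1 h2 hq c e i]
  have hc : c.1 * (-m).1 + c.2 * (-m).2 = -(c.1 * m.1 + c.2 * m.2) := by
    simp [Prod.fst_neg, Prod.snd_neg]; ring
  have he : e.1 * (-m).1 + e.2 * (-m).2 = -(e.1 * m.1 + e.2 * m.2) := by
    simp [Prod.fst_neg, Prod.snd_neg]; ring
  rw [hc, he]
  ring
end Moments

section Exist
variable {F : Type*} [Field F] [Fintype F] [DecidableEq F]

lemma exists_external (h2 : (2:F) ≠ 0) (hns : ∃ ν : F, ¬ IsSquare ν) (v : F×F×F)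
    (hv : v ≠ 0) :
    ∃ r : F×F×F, (∀ i : Option F, dot3 r (tvec i) ≠ 0) ∧ (∀ l : F, r ≠ l • v) := by
  obtain ⟨ν, hν⟩ := hns
  have key : ∀ b : F, ∀ s : F, (s+b) * (s+b) - ν ≠ 0 := by
    intro b s h
    exact hν ⟨s+b, by linear_combination -h⟩
  -- candidate r(b) = (b*b - ν, 2*b, 1) : dot with (1,s,s²) = (s+b)² - ν
  have hdot : ∀ b : F, ∀ i : Option F, dot3 (b*b - ν, 2*b, 1) (tvec i) ≠ 0 := by
    intro b i
    cases i with
    | none => simp [dot3, tvec]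
    | some s =>
      simp only [dot3, tvec]
      intro h
      exact key b s (by linear_combination h)
  by_cases h0 : ∀ l : F, (0*0 - ν, 2*0, (1:F)) ≠ l • v
  · exact ⟨_, hdot 0, h0⟩
  · push_neg at h0
    obtain ⟨l₀, hl₀⟩ := h0
    refine ⟨_, hdot 1, fun l h => ?_⟩
    -- (1*1 - ν, 2, 1) = l•v and (0-ν, 0, 1) = l₀•v
    have hl₀ne : l₀ ≠ 0 := by
      intro h'
      rw [h', zero_smul] at hl₀
      have := congrArg (fun z : F×F×F => z.2.2) hl₀
      simp at this
    have h2' := congrArg (fun z : F×F×F => z.2.1) hl₀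
    have h2'' := congrArg (fun z : F×F×F => z.2.1) h
    simp only [Prod.smul_snd, Prod.smul_fst, smul_eq_mul] at h2' h2''
    -- h2' : 2*0 = l₀ * v.2.1 ; so v.2.1 = 0; h2'' : 2 = l * v.2.1 = 0
    have hv21 : v.2.1 = 0 := by
      have : l₀ * v.2.1 = 0 := by rw [← h2']; ring
      exact (mul_eq_zero.mp this).resolve_left hl₀ne
    rw [hv21, mul_zero] at h2''
    exact h2 (by linear_combination h2'')
end Exist

section Interp
variable {F : Type*} [Field F] [Fintype F] [DecidableEq F]
open Polynomial

lemma sq_dvd_of_root_root (θ : Polynomial F) (c : F) (h0 : θ.IsRoot c)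
    (h1 : θ.derivative.IsRoot c) : (X - C c)^2 ∣ θ := by
  obtain ⟨ψ, hψ⟩ := (Polynomial.dvd_iff_isRoot).2 h0
  have hd : θ.derivative = ψ + (X - C c) * ψ.derivative := by
    rw [hψ, Polynomial.derivative_mul, Polynomial.derivative_X_sub_C, one_mul]
  have hψroot : ψ.IsRoot c := by
    have := h1
    rw [hd] at this
    simpa [Polynomial.IsRoot, Polynomial.eval_add, Polynomial.eval_mul] using this
  obtain ⟨ψ₂, hψ₂⟩ := (Polynomial.dvd_iff_isRoot).2 hψroot
  exact ⟨ψ₂, by rw [hψ, hψ₂]; ring⟩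

lemma interp_zero (qF : ℕ) (hqF : qF = Fintype.card F)
    (θ : Polynomial F) (hdeg : θ.natDegree ≤ qF - 1)
    (T : Option F → F)
    (hcol : ∀ i₁ i₂ i₃ : Option F, i₁ ≠ i₂ → i₁ ≠ i₃ → i₂ ≠ i₃ →
      ¬(T i₁ = T i₂ ∧ T i₁ = T i₃))
    (hroot : ∀ i, θ.IsRoot (T i))
    (hder : ∀ i i', i ≠ i' → T i = T i' → θ.derivative.IsRoot (T i)) :
    θ = 0 := by
  classical
  by_contra hθ
  set R := Finset.image T Finset.univ with hR
  set mc : F → ℕ := fun c => (Finset.univ.filter (fun i => T i = c)).card with hmc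
  have hmc2 : ∀ c ∈ R, mc c = 1 ∨ mc c = 2 := by
    intro c hc
    rw [hR] at hc
    obtain ⟨i, _, hi⟩ := Finset.mem_image.mp hc
    have h1 : 1 ≤ mc c := by
      rw [hmc]
      refine Finset.card_pos.mpr ⟨i, ?_⟩
      simp [hi]
    have hle : mc c ≤ 2 := by
      by_contra hgt
      push_neg at hgt
      have hgt' : 2 < (Finset.univ.filter (fun i => T i = c)).card := hgt
      obtain ⟨a, ha, b, hb, cc, hcc, hab, hac, hbc⟩ := Finset.two_lt_card.mp hgt' 
      simp only [Finset.mem_filter] at ha hb hcc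
      exact hcol a b cc hab hac hbc ⟨by rw [ha.2, hb.2], by rw [ha.2, hcc.2]⟩
    omega
  have hdvd : ∀ c ∈ R, (X - C c)^(mc c) ∣ θ := by
    intro c hc
    obtain ⟨i, _, hi⟩ := Finset.mem_image.mp (hR ▸ hc)
    rcases hmc2 c hc with h1 | h2
    · rw [h1, pow_one]
      exact (Polynomial.dvd_iff_isRoot).2 (hi ▸ hroot i)
    · rw [h2]
      -- two distinct indices with value c
      have hcard2 : 1 < (Finset.univ.filter (fun i => T i = c)).card := by
        have hb1 : mc c = (Finset.univ.filter (fun i => T i = c)).card := rfl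
        have hb2 : mc c = 2 := h2
        omega
      obtain ⟨a, ha, b, hb, hab⟩ := Finset.one_lt_card.mp hcard2
      simp only [Finset.mem_filter] at ha hb
      refine sq_dvd_of_root_root θ c (hi ▸ hroot i) ?_
      have := hder a b hab (by rw [ha.2, hb.2])
      rwa [ha.2] at this
  have hW : (∏ c ∈ R, (X - C c)^(mc c)) ∣ θ := by
    apply Finset.prod_dvd_of_coprime
    · intro c hc c' hc' hne
      exact (Polynomial.pairwise_coprime_X_sub_C (Function.injective_id) hne).pow
    · exact fun c hc => hdvd c hc
  have hWdeg : (∏ c ∈ R, (X - C c)^(mc c)).natDegree = qF + 1 := by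
    rw [Polynomial.natDegree_prod _ _ (fun c _ => pow_ne_zero _ (Polynomial.X_sub_C_ne_zero c))]
    have : ∀ c ∈ R, ((X - C c)^(mc c)).natDegree = mc c := by
      intro c _
      rw [Polynomial.natDegree_pow, Polynomial.natDegree_X_sub_C, mul_one]
    rw [Finset.sum_congr rfl this]
    have := Finset.card_eq_sum_card_image T (Finset.univ : Finset (Option F))
    rw [← hR] at this
    rw [← this, Finset.card_univ, Fintype.card_option, hqF]
  have := Polynomial.natDegree_le_of_dvd hW hθ
  rw [hWdeg] at this
  have hq1 : 1 ≤ qF := by rw [hqF]; exact Fintype.card_pos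
  omega
end Interp

section Decomp
variable {F : Type*} [Field F]

lemma rt_decomp (i i' : Option F) (hne : i ≠ i') (r : F×F×F) :
    ∃ d d' : F×F×F, r = d + d' ∧ dot3 d (tvec i) = 0 ∧ dot3 d' (tvec i') = 0 := by
  have hg : ∃ g : F×F×F, dot3 g (tvec i') = 0 ∧ dot3 g (tvec i) ≠ 0 := by
    by_cases h1 : dot3 (wvec1 i') (tvec i) ≠ 0
    · exact ⟨wvec1 i', dot3_wvec1_tvec i', h1⟩
    · by_cases hb : dot3 (wvec2 i') (tvec i) ≠ 0
      · exact ⟨wvec2 i', dot3_wvec2_tvec i', hb⟩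
      · push_neg at h1 hb
        obtain ⟨l, hl⟩ := tvec_ker i' (tvec i)
          (by rw [dot3_comm]; exact h1) (by rw [dot3_comm]; exact hb)
        exact absurd hl (tvec_indep i i' hne l)
  obtain ⟨g, hg1, hg2⟩ := hg
  refine ⟨r - (dot3 r (tvec i) / dot3 g (tvec i)) • g,
    (dot3 r (tvec i) / dot3 g (tvec i)) • g, (sub_add_cancel r _).symm, ?_, ?_⟩
  · rw [dot3_sub_left, dot3_smul_left]; field_simp; ring
  · rw [dot3_smul_left, hg1, mul_zero]
end Decomp

section CoreMoments
variable {F : Type*} [Field F] [Fintype F] [DecidableEq F]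
open Polynomial

lemma moments
    (hq : (Fintype.card F : F) = 0) (h2 : (2:F) ≠ 0) (hns : ∃ ν : F, ¬ IsSquare ν)
    (hq2 : 2 ≤ Fintype.card F)
    (U : Finset (F×F×F)) (hUcard : U.card = Fintype.card F ^ 2 - 2)
    (hU : NoDetermine U) (hsum : ∑ u ∈ U, u = 0) (v : F×F×F) :
    (∀ j : ℕ, Odd j → j ≤ Fintype.card F - 1 → ∑ u ∈ U, (dot3 u v)^j = 0) ∧
    (∀ k : ℕ, 1 ≤ k → 2*k ≤ Fintype.card F - 1 →
      ∑ u ∈ U, (dot3 u v)^(2*k)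
        = -2 * (-(2⁻¹:F) * ∑ u ∈ U, (dot3 u v)^2)^k) := by
  classical
  by_cases hv0 : v = 0
  · subst hv0
    simp only [dot3_zero_right]
    constructor
    · intro j hj _
      have hj0 : j ≠ 0 := by rcases hj with ⟨t, ht⟩; omega
      simp [zero_pow hj0]
    · intro k hk _
      have h2k : (2*k) ≠ 0 := by omega
      have e1 : ∑ _u ∈ U, (0:F)^(2*k) = 0 := by simp [zero_pow h2k]
      have e2 : ∑ _u ∈ U, (0:F)^2 = 0 := by simp
      rw [e1, e2, mul_zero, zero_pow (by omega : k ≠ 0), mul_zero]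
  -- main case
  obtain ⟨r, hrdot, hrnp⟩ := exists_external h2 hns v hv0
  have hvr : ∀ T₀ : F, v + T₀ • r ≠ 0 := by
    intro T₀ hx
    rcases eq_or_ne T₀ 0 with h0 | h0
    · rw [h0, zero_smul, add_zero] at hx; exact hv0 hx
    · apply hrnp (-T₀⁻¹)
      have h1 : T₀ • r = -v := by
        rw [add_comm] at hx
        exact eq_neg_of_add_eq_zero_left hx
      calc r = T₀⁻¹ • (T₀ • r) := by rw [smul_smul, inv_mul_cancel₀ h0, one_smul]
        _ = T₀⁻¹ • (-v) := by rw [h1]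
        _ = (-T₀⁻¹) • v := by rw [smul_neg, neg_smul]
  set T : Option F → F := fun i => -(dot3 v (tvec i)) / (dot3 r (tvec i)) with hT
  have hxT : ∀ i, dot3 (v + (T i) • r) (tvec i) = 0 := by
    intro i
    rw [dot3_add_left, dot3_smul_left, hT]
    field_simp
    rw [div_self (hrdot i), add_neg_cancel, mul_zero]
  have hcol : ∀ i₁ i₂ i₃ : Option F, i₁ ≠ i₂ → i₁ ≠ i₃ → i₂ ≠ i₃ →
      ¬(T i₁ = T i₂ ∧ T i₁ = T i₃) := by
    rintro i₁ i₂ i₃ h12 h13 h23 ⟨e12, e13⟩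
    apply hvr (T i₁)
    refine tvec_three i₁ i₂ i₃ h12 h13 h23 _ (hxT i₁) ?_ ?_
    · rw [e12]; exact hxT i₂
    · rw [e13]; exact hxT i₃
  -- planes
  have hplanes := fun i : Option F => plane_sum hq hq2 U hUcard hU hsum
    (tvec i) (wvec1 i) (wvec2 i) (quadQ_tvec i) (tvec_ker i)
  choose m hm1 hm2 using hplanes
  -- polynomials
  set A : (F×F×F) → Polynomial F :=
    fun u => Polynomial.C (dot3 u v) + Polynomial.C (dot3 u r) * Polynomial.X with hA
  set φ : ℕ → Polynomial F := fun j => ∑ u ∈ U, (A u)^j with hφ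
  have hAdeg : ∀ u, (A u).natDegree ≤ 1 := by
    intro u
    rw [hA]
    refine le_trans (Polynomial.natDegree_add_le _ _) ?_
    simp only [Polynomial.natDegree_C]
    refine max_le (by omega) (le_trans (Polynomial.natDegree_C_mul_le _ _) ?_)
    simp [Polynomial.natDegree_X]
  have hφdeg : ∀ j, (φ j).natDegree ≤ j := by
    intro j
    rw [hφ]
    refine Polynomial.natDegree_sum_le_of_forall_le _ _ (fun u _ => ?_)
    refine le_trans (Polynomial.natDegree_pow_le) ?_
    calc j * (A u).natDegree ≤ j * 1 := Nat.mul_le_mul_left j (hAdeg u)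
      _ = j := mul_one j
  have hAeval : ∀ u T₀, (A u).eval T₀ = dot3 u (v + T₀ • r) := by
    intro u T₀
    rw [hA, dot3_add_right, dot3_smul_right]
    simp [Polynomial.eval_add, Polynomial.eval_C, Polynomial.eval_mul, Polynomial.eval_X]
    ring
  have hφeval : ∀ j T₀, (φ j).eval T₀ = ∑ u ∈ U, (dot3 u (v + T₀ • r))^j := by
    intro j T₀
    rw [hφ, Polynomial.eval_finset_sum]
    exact Finset.sum_congr rfl (fun u _ => by rw [Polynomial.eval_pow, hAeval])
  have hφder : ∀ j T₀, (φ j).derivative.eval T₀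
      = (j:F) * ∑ u ∈ U, (dot3 u (v + T₀ • r))^(j-1) * (dot3 u r) := by
    intro j T₀
    rw [hφ, Polynomial.derivative_sum, Polynomial.eval_finset_sum]
    rw [Finset.mul_sum]
    refine Finset.sum_congr rfl (fun u _ => ?_)
    rw [Polynomial.derivative_pow]
    have hAder : (A u).derivative = Polynomial.C (dot3 u r) := by
      rw [hA]
      simp [Polynomial.derivative_add, Polynomial.derivative_C, Polynomial.derivative_C_mul_X]
    rw [hAder]
    simp only [Polynomial.eval_mul, Polynomial.eval_C, Polynomial.eval_pow, hAeval]
    ring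
  -- reps and alphas
  have hrep := fun i : Option F => tvec_span i _ (hxT i)
  choose cc hcc using hrep
  set α : Option F → F := fun i => (cc i).1 * (m i).1 + (cc i).2 * (m i).2 with hα
  have hM1 : ∀ i j, ∑ u ∈ U, (dot3 u (v + T i • r))^j = -(α i)^j - (-(α i))^j :=
    fun i j => plane_M1 hq U _ _ (m i) (hm2 i) _ (cc i) (hcc i) j
  have hmix : ∀ i i', i ≠ i' → T i = T i' →
      ∃ β β' : F, ∀ n : ℕ,
        ∑ u ∈ U, (dot3 u (v + T i • r))^n * (dot3 u r)
          = (-(α i)^n * β - (-(α i))^n * (-β))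
            + (-(α i')^n * β' - (-(α i'))^n * (-β')) := by
    intro i i' hne hTT
    obtain ⟨d, d', hr_eq, hdi, hdi'⟩ := rt_decomp i i' hne r
    obtain ⟨e, he⟩ := tvec_span i d hdi
    obtain ⟨e', he'⟩ := tvec_span i' d' hdi'
    refine ⟨e.1*(m i).1 + e.2*(m i).2, e'.1*(m i').1 + e'.2*(m i').2, fun n => ?_⟩
    have hsplit : ∀ u : F×F×F, (dot3 u (v + T i • r))^n * (dot3 u r)
        = (dot3 u (v + T i • r))^n * (dot3 u d)
          + (dot3 u (v + T i • r))^n * (dot3 u d') := by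
      intro u
      have hh : dot3 u r = dot3 u d + dot3 u d' := by rw [hr_eq, dot3_add_right]
      rw [hh]; ring
    rw [Finset.sum_congr rfl (fun u _ => hsplit u), Finset.sum_add_distrib]
    have t1 := plane_M2 h2 hq U _ _ (m i) (hm2 i) _ (cc i) (hcc i) d e he n
    have hcc' : ∀ u : F×F×F, dot3 u (v + T i • r)
        = (cc i').1 * dot3 u (wvec1 i') + (cc i').2 * dot3 u (wvec2 i') := by
      intro u; rw [hTT]; exact hcc i' u
    have t2 := plane_M2 h2 hq U _ _ (m i') (hm2 i') _ (cc i') hcc' d' e' he' n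
    rw [t1, t2]
  have hcons : ∀ i i', i ≠ i' → T i = T i' → (α i')^2 = (α i)^2 := by
    intro i i' hne hTT
    have e1 := hM1 i 2
    have hcc' : ∀ u : F×F×F, dot3 u (v + T i • r)
        = (cc i').1 * dot3 u (wvec1 i') + (cc i').2 * dot3 u (wvec2 i') := by
      intro u; rw [hTT]; exact hcc i' u
    have e2 := plane_M1 hq U _ _ (m i') (hm2 i') _ (cc i') hcc' 2
    have e3 := e1.symm.trans e2
    simp only [neg_sq, hα] at e3
    have h4 : (-2:F) * (α i')^2 = (-2) * (α i)^2 := by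
      simp only [hα]
      linear_combination -e3
    exact mul_left_cancel₀ (neg_ne_zero.mpr h2) h4
  have hZero : ∀ θ : Polynomial F, θ.natDegree ≤ Fintype.card F - 1 →
      (∀ i, θ.IsRoot (T i)) →
      (∀ i i', i ≠ i' → T i = T i' → θ.derivative.IsRoot (T i)) → θ = 0 :=
    fun θ hd hr hdr => interp_zero (Fintype.card F) rfl θ hd T hcol hr hdr
  constructor
  · -- odd moments vanish
    intro j hjodd hjle
    have hroot : ∀ i, (φ j).IsRoot (T i) := by
      intro i
      show (φ j).eval (T i) = 0
      rw [hφeval, hM1 i j, hjodd.neg_pow]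
      ring
    have hder : ∀ i i', i ≠ i' → T i = T i' → (φ j).derivative.IsRoot (T i) := by
      intro i i' hne hTT
      show (φ j).derivative.eval (T i) = 0
      rw [hφder]
      obtain ⟨β, β', hββ⟩ := hmix i i' hne hTT
      rw [hββ (j-1)]
      have hevenj1 : Even (j-1) := by
        rcases hjodd with ⟨t, ht⟩
        exact ⟨t, by omega⟩
      rw [hevenj1.neg_pow, hevenj1.neg_pow]
      ring
    have hzero := hZero (φ j) (le_trans (hφdeg j) hjle) hroot hder
    have heq : ∑ u ∈ U, (dot3 u v)^j = (φ j).eval 0 := by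
      rw [hφeval, zero_smul, add_zero]
    rw [heq, hzero, Polynomial.eval_zero]
  · -- even moments
    intro k hk hkle
    set ε : Polynomial F := Polynomial.C (-(2⁻¹:F)) * φ 2 with hε
    set ψ : Polynomial F := φ (2*k) + Polynomial.C 2 * ε^k with hψ
    have hεdeg : ε.natDegree ≤ 2 := le_trans (Polynomial.natDegree_C_mul_le _ _) (hφdeg 2)
    have hεeval : ∀ i, ε.eval (T i) = (α i)^2 := by
      intro i
      rw [hε, Polynomial.eval_mul, Polynomial.eval_C, hφeval, hM1 i 2, neg_sq]
      linear_combination ((α i)^2) * (inv_mul_cancel₀ h2)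
    have hψdeg : ψ.natDegree ≤ Fintype.card F - 1 := by
      rw [hψ]
      refine le_trans (Polynomial.natDegree_add_le _ _)
        (max_le (le_trans (hφdeg _) hkle) ?_)
      refine le_trans (Polynomial.natDegree_C_mul_le _ _) ?_
      refine le_trans (Polynomial.natDegree_pow_le) ?_
      calc k * ε.natDegree ≤ k * 2 := Nat.mul_le_mul_left k hεdeg
        _ = 2 * k := by ring
        _ ≤ Fintype.card F - 1 := hkle
    have hroot : ∀ i, ψ.IsRoot (T i) := by
      intro i
      show ψ.eval (T i) = 0
      rw [hψ, Polynomial.eval_add, Polynomial.eval_mul, Polynomial.eval_C,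
        Polynomial.eval_pow, hεeval, hφeval, hM1 i (2*k)]
      rw [Even.neg_pow ⟨k, by omega⟩, ← pow_mul]
      ring
    have hder : ∀ i i', i ≠ i' → T i = T i' → ψ.derivative.IsRoot (T i) := by
      intro i i' hne hTT
      obtain ⟨β, β', hββ⟩ := hmix i i' hne hTT
      have hc2 := hcons i i' hne hTT
      show ψ.derivative.eval (T i) = 0
      have hstep : ψ.derivative.eval (T i)
          = (φ (2*k)).derivative.eval (T i)
            + 2 * ((k:F) * (ε.eval (T i))^(k-1) * (ε.derivative.eval (T i))) := by
        rw [hψ, Polynomial.derivative_add, Polynomial.eval_add, Polynomial.derivative_C_mul,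
          Polynomial.eval_mul, Polynomial.eval_C, Polynomial.derivative_pow,
          Polynomial.eval_mul, Polynomial.eval_mul, Polynomial.eval_C, Polynomial.eval_pow]
      have hεder : ε.derivative.eval (T i) = -(2⁻¹:F) * ((φ 2).derivative.eval (T i)) := by
        rw [hε, Polynomial.derivative_C_mul, Polynomial.eval_mul, Polynomial.eval_C]
      have hφ2der : (φ 2).derivative.eval (T i)
          = (2:F) * ((-(α i)^1 * β - (-(α i))^1 * (-β))
            + (-(α i')^1 * β' - (-(α i'))^1 * (-β'))) := by
        rw [hφder, hββ (2-1)]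
        norm_num
      have hφ2kder : (φ (2*k)).derivative.eval (T i)
          = ((2*k : ℕ):F) * ((-(α i)^(2*k-1) * β - (-(α i))^(2*k-1) * (-β))
            + (-(α i')^(2*k-1) * β' - (-(α i'))^(2*k-1) * (-β'))) := by
        rw [hφder, hββ (2*k-1)]
      have hoddK : Odd (2*k-1) := ⟨k-1, by omega⟩
      have hp1 : (α i)^(2*k-1) = ((α i)^2)^(k-1) * (α i) := by
        rw [← pow_mul, ← pow_succ]
        congr 1
        omega
      have hp2 : (α i')^(2*k-1) = ((α i)^2)^(k-1) * (α i') := by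
        rw [← hc2, ← pow_mul, ← pow_succ]
        congr 1
        omega
      rw [hstep, hεder, hφ2der, hφ2kder, hεeval i, hoddK.neg_pow, hoddK.neg_pow, hp1, hp2]
      push_cast
      field_simp
      ring
    have hzero := hZero ψ hψdeg hroot hder
    have he0 : ψ.eval 0 = 0 := by rw [hzero, Polynomial.eval_zero]
    rw [hψ, Polynomial.eval_add, Polynomial.eval_mul, Polynomial.eval_C,
      Polynomial.eval_pow] at he0
    have hε0 : ε.eval 0 = -(2⁻¹:F) * ∑ u ∈ U, (dot3 u v)^2 := by
      rw [hε, Polynomial.eval_mul, Polynomial.eval_C, hφeval, zero_smul, add_zero]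
    have hφ2k0 : (φ (2*k)).eval 0 = ∑ u ∈ U, (dot3 u v)^(2*k) := by
      rw [hφeval, zero_smul, add_zero]
    rw [hε0, hφ2k0] at he0
    linear_combination he0
end CoreMoments


section Assembly
variable {F : Type*} [Field F] [Fintype F] [DecidableEq F]
open Polynomial

lemma sigma_eq (h2 : (2:F) ≠ 0) (U : Finset (F×F×F)) (hsum : ∑ u ∈ U, u = 0)
    (v : F×F×F) : sigmaU U v 2 = -(2⁻¹:F) * ∑ u ∈ U, (dot3 u v)^2 := by
  have hs : (U.val.map (fun u => dot3 u v)).sum = 0 := by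
    have h0 : (U.val.map (fun u => dot3 u v)).sum = ∑ u ∈ U, dot3 u v := rfl
    rw [h0, ← dot3_sum_left, hsum, dot3_zero_left]
  have h := two_mul_esymm_two (U.val.map (fun u => dot3 u v))
  rw [hs] at h
  have hmap : ((U.val.map (fun u => dot3 u v)).map (fun a => a^2)).sum
      = ∑ u ∈ U, (dot3 u v)^2 := by
    rw [Multiset.map_map]; rfl
  rw [hmap] at h
  apply mul_left_cancel₀ h2
  rw [sigmaU, h]
  field_simp
  ring

theorem main_thm {p h : ℕ} (hp : p.Prime) (hodd : Odd p) (hh : 1 ≤ h)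
    (hcard : Fintype.card F = p ^ h)
    (U : Finset (F × F × F))
    (hUcard : U.card = Fintype.card F ^ 2 - 2)
    (hU : NoDetermine U)
    (hsum : ∑ u ∈ U, u = 0)
    (v : F × F × F) :
    ∑ u ∈ U, (X + C (dot3 u v)) ^ (Fintype.card F - 1) =
      -2 * ∑ k ∈ Finset.range ((Fintype.card F - 1) / 2 + 1),
        C (sigmaU U v 2 ^ k) * X ^ (Fintype.card F - 1 - 2 * k) := by
  classical
  obtain ⟨hcharP, h2⟩ := char_facts hp hodd hh hcard
  haveI := hcharP
  have hq0 : ((Fintype.card F : ℕ) : F) = 0 := FiniteField.cast_card_eq_zero F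
  have hq2 : 2 ≤ Fintype.card F := Fintype.one_lt_card
  have hrc : ringChar F = p := ringChar.eq F p
  have hns : ∃ ν : F, ¬ IsSquare ν := by
    apply FiniteField.exists_nonsquare
    rw [hrc]
    intro hp2
    rw [hp2] at hodd
    exact (Nat.not_odd_iff_even.mpr even_two) hodd
  have hqodd : Odd (Fintype.card F) := by rw [hcard]; exact hodd.pow
  set N := Fintype.card F - 1 with hN
  have hNeven : Even N := by
    rcases hqodd with ⟨t, ht⟩
    exact ⟨t, by omega⟩
  obtain ⟨hODD, hEVEN⟩ := moments hq0 h2 hns hq2 U hUcard hU hsum v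
  have hsigma : sigmaU U v 2 = -(2⁻¹:F) * ∑ u ∈ U, (dot3 u v)^2 :=
    sigma_eq h2 U hsum v
  apply Polynomial.ext
  intro n
  rw [Polynomial.finset_sum_coeff]
  have hLc : ∀ u : F×F×F, ((X + C (dot3 u v))^N).coeff n
      = (dot3 u v)^(N - n) * (Nat.choose N n : F) :=
    fun u => Polynomial.coeff_X_add_C_pow _ _ _
  rw [Finset.sum_congr rfl (fun u _ => hLc u), ← Finset.sum_mul]
  have hC2 : (Polynomial.C (-2 : F)) = (-2 : Polynomial F) := by
    rw [map_neg, map_ofNat]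
  rw [← hC2, Polynomial.coeff_C_mul, Polynomial.finset_sum_coeff]
  have hRc : ∀ k, (Polynomial.C ((sigmaU U v 2)^k) * X^(N - 2*k)).coeff n
      = if n = N - 2*k then (sigmaU U v 2)^k else 0 := by
    intro k
    rw [Polynomial.coeff_C_mul, Polynomial.coeff_X_pow]
    split <;> simp
  rw [Finset.sum_congr rfl (fun k _ => hRc k)]
  by_cases hn : N < n
  · rw [Nat.choose_eq_zero_of_lt hn]
    rw [Nat.cast_zero, mul_zero]
    rw [Finset.sum_eq_zero, mul_zero]
    intro k hk
    rw [if_neg]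
    omega
  · push_neg at hn
    have hchoose : (Nat.choose N n : F) = (-1)^n := choose_cast hp hcard n hn
    rw [hchoose]
    set j := N - n with hj
    by_cases hpar : Odd j
    · rw [hODD j hpar (by omega)]
      rw [zero_mul, Finset.sum_eq_zero, mul_zero]
      intro k hk
      rw [Finset.mem_range] at hk
      rw [if_neg]
      intro hkn
      have h2k : 2*k ≤ N := by
        have : k ≤ N/2 := by omega
        omega
      have : j = 2*k := by omega
      rw [this] at hpar
      exact (Nat.not_odd_iff_even.mpr ⟨k, by omega⟩) hpar
    · have hjeven : Even j := Nat.not_odd_iff_even.mp hpar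
      obtain ⟨k₀, hk₀⟩ := hjeven
      have hjk : j = 2 * k₀ := by omega
      have hneven : Even n := by
        rcases hNeven with ⟨t, ht⟩
        exact ⟨t - k₀, by omega⟩
      rw [hneven.neg_one_pow, mul_one]
      have hk₀mem : k₀ ∈ Finset.range (N/2 + 1) := by
        rw [Finset.mem_range]
        omega
      have hsum_ite : ∑ k ∈ Finset.range (N/2 + 1),
          (if n = N - 2*k then (sigmaU U v 2)^k else 0) = (sigmaU U v 2)^k₀ := by
        rw [Finset.sum_eq_single k₀]
        · rw [if_pos (by omega)]
        · intro k hk hkne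
          rw [Finset.mem_range] at hk
          rw [if_neg]
          intro hkn
          have h2k : 2*k ≤ N := by
            have : k ≤ N/2 := by omega
            omega
          exact hkne (by omega)
        · intro habs
          exact absurd hk₀mem habs
      rw [hsum_ite]
      rcases Nat.eq_zero_or_pos k₀ with hk0 | hk0
      · subst hk0
        have hn0 : j = 0 := by omega
        rw [hn0]
        simp only [pow_zero, mul_one]
        rw [Finset.sum_const, hUcard, nsmul_eq_mul, mul_one]
        have hle : 2 ≤ Fintype.card F ^ 2 := by nlinarith
        rw [Nat.cast_sub hle, Nat.cast_pow, hq0]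
        norm_num
      · have hkey := hEVEN k₀ hk0 (by omega)
        rw [← hjk] at hkey
        rw [hkey, ← hsigma]
end Assembly

open Polynomial in
theorem stmt_12 {p h : ℕ} (hp : p.Prime) (hodd : Odd p) (hh : 1 ≤ h)
    {F : Type*} [Field F] [Fintype F] [DecidableEq F]
    (hcard : Fintype.card F = p ^ h)
    (U : Finset (F × F × F))
    (hUcard : U.card = Fintype.card F ^ 2 - 2)
    (hU : NoDetermine U)
    (hsum : ∑ u ∈ U, u = 0)
    (v : F × F × F) :
    ∑ u ∈ U, (X + C (dot3 u v)) ^ (Fintype.card F - 1) =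
      -2 * ∑ k ∈ Finset.range ((Fintype.card F - 1) / 2 + 1),
        C (sigmaU U v 2 ^ k) * X ^ (Fintype.card F - 1 - 2 * k) := by
  exact main_thm hp hodd hh hcard U hUcard hU hsum v
end

section
/- Let q = p be an odd prime and let U ⊆ F_p³ be a set of p² − 2 points that does not determine the points of C, with ∑_{u∈U} u = (0,0,0). Let (y,z,w) ∈ F_p³ be nonzero with σ₂(y,z,w) = 0. Then |π(0,y,z,w) ∩ U| ≡ −2 (mod p), and for every x ∈ F_p with x ≠ 0, |π(x,y,z,w) ∩ U| ≡ 0 (mod p). -/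
namespace Stmt13Aux

variable {F : Type*} [Field F]

/-- cross product -/
def cross (a b : F × F × F) : F × F × F :=
  (a.2.1 * b.2.2 - a.2.2 * b.2.1, a.2.2 * b.1 - a.1 * b.2.2, a.1 * b.2.1 - a.2.1 * b.1)

lemma dot3_comm (a b : F × F × F) : dot3 a b = dot3 b a := by
  simp [dot3]; ring

lemma triple (d v w : F × F × F) :
    cross d (cross v w) =
      ((dot3 d w) * v.1 - (dot3 d v) * w.1,
       (dot3 d w) * v.2.1 - (dot3 d v) * w.2.1,
       (dot3 d w) * v.2.2 - (dot3 d v) * w.2.2) := by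
  simp only [cross, dot3, Prod.mk.injEq]
  refine ⟨by ring, by ring, by ring⟩

lemma ne_zero_iff (a : F × F × F) : a ≠ 0 ↔ a.1 ≠ 0 ∨ a.2.1 ≠ 0 ∨ a.2.2 ≠ 0 := by
  constructor
  · intro h
    by_contra hc
    push_neg at hc
    exact h (by ext <;> simp [hc.1, hc.2.1, hc.2.2])
  · rintro h rfl
    simp at h

lemma exists_w (v t : F × F × F) (hv : v ≠ 0) (ht : dot3 v t = 0) :
    ∃ w : F × F × F, cross v w = t := by
  obtain ⟨v1, v2, v3⟩ := v
  obtain ⟨t1, t2, t3⟩ := t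
  rw [ne_zero_iff] at hv
  simp only [dot3] at ht
  simp only at hv ⊢
  rcases hv with h | h | h
  · refine ⟨(0, t3 / v1, -t2 / v1), ?_⟩
    simp only [cross, Prod.mk.injEq]
    refine ⟨?_, by field_simp; ring, by field_simp; ring⟩
    field_simp
    linear_combination -ht
  · refine ⟨(-t3 / v2, 0, t1 / v2), ?_⟩
    simp only [cross, Prod.mk.injEq]
    refine ⟨by field_simp; ring, ?_, by field_simp; ring⟩
    field_simp
    linear_combination -ht
  · refine ⟨(t2 / v3, -t1 / v3, 0), ?_⟩
    simp only [cross, Prod.mk.injEq]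
    refine ⟨by field_simp; ring, by field_simp; ring, ?_⟩
    field_simp
    linear_combination -ht

lemma parallel_of_cross_eq_zero (d t : F × F × F) (ht : t ≠ 0) (h : cross d t = 0) :
    ∃ lam : F, d = (lam * t.1, lam * t.2.1, lam * t.2.2) := by
  rw [ne_zero_iff] at ht
  have h1 : d.2.1 * t.2.2 - d.2.2 * t.2.1 = 0 := congrArg Prod.fst h
  have h2 : d.2.2 * t.1 - d.1 * t.2.2 = 0 := congrArg (fun x => x.2.1) h
  have h3 : d.1 * t.2.1 - d.2.1 * t.1 = 0 := congrArg (fun x => x.2.2) h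
  rcases ht with hne | hne | hne
  · refine ⟨d.1 / t.1, ?_⟩
    have e1 : d.1 = d.1 / t.1 * t.1 := by field_simp
    have e2 : d.2.1 = d.1 / t.1 * t.2.1 := by field_simp; linear_combination -h3
    have e3 : d.2.2 = d.1 / t.1 * t.2.2 := by field_simp; linear_combination h2
    exact Prod.ext e1 (Prod.ext e2 e3)
  · refine ⟨d.2.1 / t.2.1, ?_⟩
    have e1 : d.1 = d.2.1 / t.2.1 * t.1 := by field_simp; linear_combination h3
    have e2 : d.2.1 = d.2.1 / t.2.1 * t.2.1 := by field_simp
    have e3 : d.2.2 = d.2.1 / t.2.1 * t.2.2 := by field_simp; linear_combination -h1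
    exact Prod.ext e1 (Prod.ext e2 e3)
  · refine ⟨d.2.2 / t.2.2, ?_⟩
    have e1 : d.1 = d.2.2 / t.2.2 * t.1 := by field_simp; linear_combination -h2
    have e2 : d.2.1 = d.2.2 / t.2.2 * t.2.1 := by field_simp; linear_combination h1
    have e3 : d.2.2 = d.2.2 / t.2.2 * t.2.2 := by field_simp
    exact Prod.ext e1 (Prod.ext e2 e3)

lemma quadQ_parallel (lam : F) (t : F × F × F) :
    quadQ ((lam * t.1, lam * t.2.1, lam * t.2.2) : F × F × F) = lam ^ 2 * quadQ t := by
  simp [quadQ]; ring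


lemma esymm_two (s : Multiset F) :
    2 * s.esymm 2 = s.sum ^ 2 - (s.map (fun a => a ^ 2)).sum := by
  induction s using Multiset.induction_on with
  | empty =>
      simp [Multiset.esymm, Multiset.powersetCard_eq_empty (α := F) 2 (s := 0) (by simp)]
  | cons a s ih =>
      have h2 : s.esymm 1 = s.sum := by
        rw [Multiset.esymm, Multiset.powersetCard_one, Multiset.map_map]
        simp [Function.comp]
      have h1 : (a ::ₘ s).esymm 2 = s.esymm 2 + a * s.esymm 1 := by
        rw [Multiset.esymm, show (2 : ℕ) = 1 + 1 from rfl, Multiset.powersetCard_cons,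
          Multiset.map_add, Multiset.sum_add, Multiset.map_map]
        congr 1
        simp only [Function.comp_def, Multiset.prod_cons]
        rw [Multiset.sum_map_mul_left, Multiset.esymm]
      rw [h1, h2, Multiset.sum_cons, Multiset.map_cons, Multiset.sum_cons]
      linear_combination ih

section Counting

variable {p : ℕ} [Fintype F] [DecidableEq F]

/-- planes through an internal/tangent line meet U in at most p points -/
lemma card_plane_le (hp : p.Prime) (hcard : Fintype.card F = p)
    (U : Finset (F × F × F)) (hU : NoDetermine U)
    (v t : F × F × F) (hv : v ≠ 0) (ht0 : t ≠ 0) (htC : quadQ t = 0)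
    (hvt : dot3 v t = 0) (y : F) :
    (U.filter (fun a => dot3 a v = y)).card ≤ p := by
  obtain ⟨w, hw⟩ := exists_w v t hv hvt
  have : (U.filter (fun a => dot3 a v = y)).card ≤ (Finset.univ : Finset F).card := by
    apply Finset.card_le_card_of_injOn (fun a => dot3 a w) (fun a _ => Finset.mem_univ _)
    intro a ha b hb hab
    simp only [Finset.coe_filter, Set.mem_setOf_eq] at ha hb
    by_contra hne
    have hdv : dot3 (a - b) v = 0 := by
      simp only [dot3, Prod.fst_sub, Prod.snd_sub] at *
      linear_combination ha.2 - hb.2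
    have hdw : dot3 (a - b) w = 0 := by
      simp only [dot3, Prod.fst_sub, Prod.snd_sub] at *
      linear_combination hab
    have hcr : cross (a - b) t = 0 := by
      rw [← hw, triple, hdv, hdw]
      simp
    obtain ⟨lam, hlam⟩ := parallel_of_cross_eq_zero _ t ht0 hcr
    have : quadQ (a - b) = 0 := by
      rw [hlam, quadQ_parallel, htC, mul_zero]
    exact hU a ha.1 b hb.1 hne this
  simpa [hcard] using this

lemma multiset_plus_two (hp : p.Prime) (hcard : Fintype.card F = p)
    (U : Finset (F × F × F)) (hUcard : U.card = p ^ 2 - 2) (hU : NoDetermine U)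
    (v t : F × F × F) (hv : v ≠ 0) (ht0 : t ≠ 0) (htC : quadQ t = 0)
    (hvt : dot3 v t = 0) :
    ∃ b₁ b₂ : F, U.val.map (fun u => dot3 u v) + {b₁, b₂} =
      p • (Finset.univ : Finset F).val := by
  set s : Multiset F := U.val.map (fun u => dot3 u v) with hs
  have hle : s ≤ p • (Finset.univ : Finset F).val := by
    rw [Multiset.le_iff_count]
    intro y
    have h1 : s.count y = (U.filter (fun a => dot3 a v = y)).card := by
      rw [hs, Multiset.count_map]
      congr 1
      exact Multiset.filter_congr (fun a _ => by rw [eq_comm])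
    have h2 : (p • (Finset.univ : Finset F).val).count y = p := by
      rw [Multiset.count_nsmul]
      rw [Multiset.count_eq_one_of_mem Finset.univ.nodup (Finset.mem_univ y), mul_one]
    rw [h1, h2]
    exact card_plane_le hp hcard U hU v t hv ht0 htC hvt y
  have hcards : Multiset.card s = p ^ 2 - 2 := by
    rw [hs, Multiset.card_map]; exact hUcard
  have hcardT : Multiset.card (p • (Finset.univ : Finset F).val) = p * p := by
    rw [Multiset.card_nsmul]
    have : Multiset.card (Finset.univ : Finset F).val = p := by
      rw [← Finset.card_def, Finset.card_univ, hcard]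
    rw [this]
  have hsub := tsub_add_cancel_of_le hle  -- maybe tsub_add_cancel_of_le
  have hc2 : Multiset.card (p • (Finset.univ : Finset F).val - s) = 2 := by
    have := congrArg Multiset.card hsub
    rw [Multiset.card_add, hcards, hcardT] at this
    have hp2 : 2 ≤ p ^ 2 := by nlinarith [hp.two_le]
    have hpp : p * p = p ^ 2 := (sq p).symm
    omega
  obtain ⟨b₁, b₂, hb⟩ := Multiset.card_eq_two.mp hc2
  refine ⟨b₁, b₂, ?_⟩
  rw [← hb, add_comm]
  exact hsub


lemma sum_dot3 {U : Finset (F × F × F)} (w : F × F × F) :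
    ∑ u ∈ U, dot3 u w = dot3 (∑ u ∈ U, u) w := by
  simp only [dot3, Prod.fst_sum, Prod.snd_sum, Finset.sum_add_distrib, Finset.sum_mul]

lemma psum_formula (hp : p.Prime) (hcard : Fintype.card F = p)
    (hchar : (p : F) = 0) (h2 : (2 : F) ≠ 0)
    (U : Finset (F × F × F)) (hUcard : U.card = p ^ 2 - 2) (hU : NoDetermine U)
    (hsum : ∑ u ∈ U, u = 0)
    (v : F × F × F)
    (hne : v = 0 ∨ ∃ t : F × F × F, t ≠ 0 ∧ quadQ t = 0 ∧ dot3 v t = 0)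
    (k : ℕ) (hk : 1 ≤ k) :
    ∑ u ∈ U, (dot3 u v) ^ k =
      if Even k then -2 * (-(2⁻¹ : F) * ∑ u ∈ U, (dot3 u v) ^ 2) ^ (k / 2) else 0 := by
  rcases eq_or_ne v 0 with rfl | hv0
  · have hz : ∀ u ∈ U, dot3 u (0 : F × F × F) = 0 := by intro u _; simp [dot3]
    have hzk : ∀ j, 1 ≤ j → ∑ u ∈ U, (dot3 u (0 : F × F × F)) ^ j = 0 := by
      intro j hj
      refine Finset.sum_eq_zero fun u hu => ?_
      rw [hz u hu, zero_pow (by omega)]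
    rw [hzk k hk]
    split_ifs with he
    · have hk2 : 1 ≤ k / 2 := by
        obtain ⟨m, hm⟩ := he; omega
      rw [hzk 2 (by norm_num), mul_zero, zero_pow (by omega), mul_zero]
    · rfl
  · obtain ⟨t, ht0, htC, hvt⟩ := hne.resolve_left hv0
    obtain ⟨b₁, b₂, hb⟩ := multiset_plus_two hp hcard U hUcard hU v t hv0 ht0 htC hvt
    have key : ∀ j : ℕ, ∑ u ∈ U, (dot3 u v) ^ j + (b₁ ^ j + b₂ ^ j) = 0 := by
      intro j
      have hmap := congrArg (fun m : Multiset F => ((m.map (fun a => a ^ j)).sum)) hb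
      simp only [Multiset.map_add, Multiset.sum_add, Multiset.map_map, Function.comp] at hmap
      have hL : ((U.val.map (fun u => (dot3 u v) ^ j)).sum) = ∑ u ∈ U, (dot3 u v) ^ j := rfl
      have hpair : ((({b₁, b₂} : Multiset F).map (fun a => a ^ j)).sum) = b₁ ^ j + b₂ ^ j := by
        simp [Multiset.insert_eq_cons]
      have hR : (((p • (Finset.univ : Finset F).val).map (fun a => a ^ j)).sum) = 0 := by
        rw [Multiset.map_nsmul, Multiset.sum_nsmul, nsmul_eq_mul, hchar, zero_mul]
      rw [hL] at hmap
      calc ∑ u ∈ U, (dot3 u v) ^ j + (b₁ ^ j + b₂ ^ j)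
          = ((p • (Finset.univ : Finset F).val).map (fun a => a ^ j)).sum := by
            rw [← hmap]; rw [hpair]
        _ = 0 := hR
    have hb2 : b₂ = -b₁ := by
      have h1 := key 1
      simp only [pow_one] at h1
      have hs1 : ∑ u ∈ U, dot3 u v = 0 := by rw [sum_dot3, hsum]; simp [dot3]
      rw [hs1, zero_add] at h1
      linear_combination h1
    have hb1sq : b₁ ^ 2 = -(2⁻¹ : F) * ∑ u ∈ U, (dot3 u v) ^ 2 := by
      have h2' := key 2
      rw [hb2] at h2'
      have : (-b₁) ^ 2 = b₁ ^ 2 := by ring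
      rw [this] at h2'
      have h3 : (2 : F) * b₁ ^ 2 = -(∑ u ∈ U, (dot3 u v) ^ 2) := by
        linear_combination h2'
      field_simp
      linear_combination h3
    have hkk := key k
    split_ifs with he
    · rw [hb2, Even.neg_pow he] at hkk
      have : b₁ ^ k = (b₁ ^ 2) ^ (k / 2) := by
        rw [← pow_mul]
        congr 1
        obtain ⟨m, hm⟩ := he
        omega
      rw [← hb1sq, ← this]
      linear_combination hkk
    · rw [hb2, Odd.neg_pow (Nat.not_even_iff_odd.mp he)] at hkk
      linear_combination hkk

end Counting

section Poly

variable [Fintype F] [DecidableEq F]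

open MvPolynomial in
noncomputable def gpoly (u : F × F × F) : MvPolynomial (Fin 3) F :=
  X 0 * (C u.1 * X 1 * X 2 + C (-u.2.1) * X 1 + C (-u.2.1) * X 2 + C u.2.2)

open MvPolynomial in
lemma degreeOf_gpoly (i : Fin 3) (u : F × F × F) : degreeOf i (gpoly u) ≤ 1 := by
  have hCX : ∀ (a : F) (j : Fin 3), degrees (C a * X j : MvPolynomial (Fin 3) F) ≤ {j} := by
    intro a j
    refine le_trans degrees_mul_le ?_
    rw [degrees_C, degrees_X]
    simp
  have hQ : degrees (C u.1 * X 1 * X 2 + C (-u.2.1) * X 1 + C (-u.2.1) * X 2 + C u.2.2 :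
      MvPolynomial (Fin 3) F) ≤ ({1, 2} : Multiset (Fin 3)) := by
    refine le_trans degrees_add_le (sup_le (le_trans degrees_add_le (sup_le
      (le_trans degrees_add_le (sup_le ?_ ?_)) ?_)) ?_)
    · refine le_trans degrees_mul_le ?_
      refine le_trans (add_le_add (hCX _ _) (le_of_eq (degrees_X _))) ?_
      rw [Multiset.singleton_add]
      decide
    · exact le_trans (hCX _ _) (by decide)
    · exact le_trans (hCX _ _) (by decide)
    · rw [degrees_C]; exact Multiset.zero_le _
  have hg : degrees (gpoly u) ≤ ({0, 1, 2} : Multiset (Fin 3)) := by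
    refine le_trans degrees_mul_le ?_
    rw [degrees_X]
    refine le_trans (add_le_add le_rfl hQ) ?_
    rw [Multiset.singleton_add]
    decide
  have h1 := Multiset.count_le_of_le i hg
  have h2 : Multiset.count i ({0, 1, 2} : Multiset (Fin 3)) ≤ 1 := by fin_cases i <;> decide
  have h3 := le_trans h1 h2
  rw [MvPolynomial.degreeOf]
  convert h3 using 2
  rfl

open MvPolynomial in
lemma eval_gpoly (x : Fin 3 → F) (u : F × F × F) :
    eval x (gpoly u) = dot3 u (x 0 * x 1 * x 2, -(x 0 * x 1 + x 0 * x 2), x 0) := by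
  simp only [gpoly, dot3, map_add, map_mul, eval_X, eval_C, map_neg]
  ring


open MvPolynomial in
lemma mv_eq_zero {p : ℕ} (hp : p.Prime) (hcard : Fintype.card F = p)
    (P : MvPolynomial (Fin 3) F)
    (heval : ∀ x : Fin 3 → F, eval x P = 0)
    (hdeg : ∀ i, degreeOf i P ≤ p - 1) : P = 0 := by
  haveI : Fact p.Prime := ⟨hp⟩
  haveI : NeZero p := ⟨hp.ne_zero⟩
  have h0 : (p : F) = 0 := by rw [← hcard]; exact FiniteField.cast_card_eq_zero F
  have hdvd : ringChar F ∣ p := ringChar.dvd h0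
  have hchar : ringChar F = p := by
    rcases (Nat.Prime.eq_one_or_self_of_dvd hp _ hdvd) with h | h
    · exact absurd h (CharP.ringChar_ne_one)
    · exact h
  haveI : CharP F p := by rw [← hchar]; exact ringChar.charP F
  let e : ZMod p →+* F := ZMod.castHom dvd_rfl F
  have hinj : Function.Injective e := e.injective
  have hbij : Function.Bijective e := by
    rw [Fintype.bijective_iff_injective_and_card]
    exact ⟨hinj, by rw [ZMod.card, hcard]⟩
  let e' : ZMod p ≃+* F := RingEquiv.ofBijective e hbij
  set Q : MvPolynomial (Fin 3) (ZMod p) := MvPolynomial.map (e'.symm : F →+* ZMod p) P with hQ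
  have hQ0 : Q = 0 := by
    apply MvPolynomial.eq_zero_of_eval_eq_zero (Fin 3) (ZMod p)
    · intro y
      have h1 : eval y Q = e'.symm (eval (fun i => e' (y i)) P) := by
        have hcl := eval₂_comp_left ((e'.symm : F →+* ZMod p)) (RingHom.id F)
          (fun i => e' (y i)) P
        simp only [RingHom.comp_id, Function.comp_def, RingEquiv.coe_toRingHom,
          RingEquiv.symm_apply_apply] at hcl
        rw [hQ, eval_map]
        rw [← hcl]
        rfl
      rw [h1, heval _, map_zero]
    · rw [MvPolynomial.mem_restrictDegree]
      intro s hs i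
      have hsup : s ∈ P.support := MvPolynomial.support_map_subset _ _ hs
      have := MvPolynomial.degreeOf_le_iff.mp (hdeg i) s hsup
      rw [ZMod.card]
      exact this
  have : MvPolynomial.map (e' : ZMod p →+* F) Q = P := by
    rw [hQ, MvPolynomial.map_map]
    have : (e' : ZMod p →+* F).comp (e'.symm : F →+* ZMod p) = RingHom.id F := by
      ext a
      simp
    rw [this, MvPolynomial.map_id]
  rw [← this, hQ0]
  simp

noncomputable def Ppoly (U : Finset (F × F × F)) (k : ℕ) : MvPolynomial (Fin 3) F :=
  ∑ u ∈ U, (gpoly u) ^ k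

open MvPolynomial in
noncomputable def Dpoly (U : Finset (F × F × F)) (k : ℕ) : MvPolynomial (Fin 3) F :=
  Ppoly U k -
    (if Even k then (C (-2 : F)) * ((C (-(2⁻¹ : F))) * Ppoly U 2) ^ (k / 2) else 0)

open MvPolynomial in
lemma eval_Ppoly (U : Finset (F × F × F)) (k : ℕ) (x : Fin 3 → F) :
    eval x (Ppoly U k) =
      ∑ u ∈ U, (dot3 u (x 0 * x 1 * x 2, -(x 0 * x 1 + x 0 * x 2), x 0)) ^ k := by
  rw [Ppoly, map_sum]
  exact Finset.sum_congr rfl fun u _ => by rw [map_pow, eval_gpoly]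

open MvPolynomial in
lemma degreeOf_Ppoly (U : Finset (F × F × F)) (k : ℕ) (i : Fin 3) :
    degreeOf i (Ppoly U k) ≤ k := by
  refine le_trans (degreeOf_sum_le _ _ _) (Finset.sup_le fun u _ => ?_)
  refine le_trans (degreeOf_pow_le _ _ _) ?_
  calc k * degreeOf i (gpoly u) ≤ k * 1 := Nat.mul_le_mul_left k (degreeOf_gpoly i u)
    _ = k := mul_one k

open MvPolynomial in
lemma Dpoly_eq_zero {p : ℕ} (hp : p.Prime) (hcard : Fintype.card F = p)
    (hchar : (p : F) = 0) (h2 : (2 : F) ≠ 0)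
    (U : Finset (F × F × F)) (hUcard : U.card = p ^ 2 - 2) (hU : NoDetermine U)
    (hsum : ∑ u ∈ U, u = 0)
    (k : ℕ) (hk1 : 1 ≤ k) (hk2 : k ≤ p - 1) :
    Dpoly U k = 0 := by
  apply mv_eq_zero hp hcard
  · intro x
    set v' : F × F × F := (x 0 * x 1 * x 2, -(x 0 * x 1 + x 0 * x 2), x 0) with hv'
    have hne : v' = 0 ∨ ∃ t : F × F × F, t ≠ 0 ∧ quadQ t = 0 ∧ dot3 v' t = 0 := by
      rcases eq_or_ne (x 0) 0 with h0 | h0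
      · left
        rw [hv', h0]
        ext <;> simp
      · right
        refine ⟨(1, x 1, x 1 * x 1), ?_, ?_, ?_⟩
        · rw [ne_zero_iff]; left; exact one_ne_zero
        · simp only [quadQ]; ring
        · simp only [dot3, hv']; ring
    have hf := psum_formula hp hcard hchar h2 U hUcard hU hsum v' hne k hk1
    rw [Dpoly, map_sub, eval_Ppoly, ← hv']
    rw [hf]
    split_ifs with he
    · rw [map_mul, map_pow, map_mul, eval_C, eval_C, eval_Ppoly, ← hv']
      ring
    · rw [map_zero]
      ring
  · intro i
    rw [Dpoly]
    refine le_trans (degreeOf_sub_le _ _ _) (sup_le (le_trans (degreeOf_Ppoly _ _ _) hk2) ?_)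
    split_ifs with he
    · refine le_trans (degreeOf_mul_le _ _ _) ?_
      rw [degreeOf_C, zero_add]
      refine le_trans (degreeOf_pow_le _ _ _) ?_
      have hin : degreeOf i (C (-(2⁻¹ : F)) * Ppoly U 2) ≤ 2 :=
        le_trans (degreeOf_mul_le _ _ _)
          (by rw [degreeOf_C, zero_add]; exact degreeOf_Ppoly U 2 i)
      refine le_trans (Nat.mul_le_mul_left _ hin) ?_
      obtain ⟨m, hm⟩ := he
      omega
    · rw [degreeOf_zero]
      omega


open MvPolynomial in
lemma psum_eq_zero {p : ℕ} (hp : p.Prime) (hcard : Fintype.card F = p)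
    (hchar : (p : F) = 0) (h2 : (2 : F) ≠ 0)
    (U : Finset (F × F × F)) (hUcard : U.card = p ^ 2 - 2) (hU : NoDetermine U)
    (hsum : ∑ u ∈ U, u = 0)
    (v : F × F × F) (hP2 : ∑ u ∈ U, (dot3 u v) ^ 2 = 0)
    (k : ℕ) (hk1 : 1 ≤ k) (hk2 : k ≤ p - 1) :
    ∑ u ∈ U, (dot3 u v) ^ k = 0 := by
  have hsplit : ∀ w : F × F × F,
      (w = 0 ∨ ∃ t : F × F × F, t ≠ 0 ∧ quadQ t = 0 ∧ dot3 w t = 0) →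
      ∑ u ∈ U, (dot3 u w) ^ 2 = 0 →
      ∑ u ∈ U, (dot3 u w) ^ k = 0 := by
    intro w hne hw2
    rw [psum_formula hp hcard hchar h2 U hUcard hU hsum w hne k hk1]
    split_ifs with he
    · rw [hw2, mul_zero, zero_pow, mul_zero]
      obtain ⟨m, hm⟩ := he
      omega
    · rfl
  rcases eq_or_ne v.2.2 0 with h0 | h0
  · refine hsplit v (Or.inr ⟨(0, 0, 1), ?_, ?_, ?_⟩) hP2
    · rw [ne_zero_iff]; right; right; exact one_ne_zero
    · simp [quadQ]
    · simp [dot3, h0]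
  · have hD := Dpoly_eq_zero hp hcard hchar h2 U hUcard hU hsum k hk1 hk2
    set K := AlgebraicClosure F
    set φ : F →+* K := algebraMap F K with hφ
    have hφinj : Function.Injective φ := φ.injective
    have hv2 : φ v.2.2 ≠ 0 := fun h => h0 (hφinj (by rw [h, map_zero]))
    set B : K := φ v.2.1 / φ v.2.2 with hB
    set Cc : K := φ v.1 / φ v.2.2 with hCc
    obtain ⟨s₁, hs₁⟩ := IsAlgClosed.exists_root
      (Polynomial.C (1 : K) * Polynomial.X ^ 2 + Polynomial.C B * Polynomial.X + Polynomial.C Cc)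
      (by rw [Polynomial.degree_quadratic one_ne_zero]; exact (by decide))
    have hroot : s₁ ^ 2 + B * s₁ + Cc = 0 := by
      have := hs₁
      simp only [Polynomial.IsRoot, Polynomial.eval_add, Polynomial.eval_mul,
        Polynomial.eval_pow, Polynomial.eval_C, Polynomial.eval_X, one_mul] at this
      exact this
    set s₂ : K := -B - s₁ with hs₂
    have r1 : φ v.2.2 * (s₁ * s₂) = φ v.1 := by
      have hmul : s₁ * s₂ = Cc := by rw [hs₂]; linear_combination -hroot
      rw [hmul, hCc]
      exact mul_div_cancel₀ _ hv2
    have r2 : φ v.2.2 * (s₁ + s₂) = -φ v.2.1 := by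
      rw [hs₂, hB]
      rw [mul_add, mul_sub, mul_neg, mul_div_cancel₀ _ hv2]
      ring
    set x : Fin 3 → K := ![φ v.2.2, s₁, s₂] with hx
    have hx0 : x 0 = φ v.2.2 := rfl
    have hx1 : x 1 = s₁ := rfl
    have hx2 : x 2 = s₂ := rfl
    have hg : ∀ u : F × F × F, (aeval x) (gpoly u) = φ (dot3 u v) := by
      intro u
      simp only [gpoly, dot3, map_add, map_mul, map_neg, aeval_X, aeval_C, hx0, hx1, hx2]
      have : (algebraMap F K) = φ := rfl
      rw [this]
      push_cast [map_add, map_mul, map_neg]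
      linear_combination φ u.1 * r1 - φ u.2.1 * r2
    have hz := congrArg (aeval x) hD
    rw [map_zero] at hz
    rw [Dpoly, map_sub] at hz
    have hPk : (aeval x) (Ppoly U k) = φ (∑ u ∈ U, (dot3 u v) ^ k) := by
      rw [Ppoly, map_sum, map_sum]
      exact Finset.sum_congr rfl fun u _ => by rw [map_pow, hg, map_pow]
    have hP2' : (aeval x) (Ppoly U 2) = 0 := by
      rw [Ppoly, map_sum]
      have : ∑ u ∈ U, (aeval x) (gpoly u ^ 2) = φ (∑ u ∈ U, (dot3 u v) ^ 2) := by
        rw [map_sum]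
        exact Finset.sum_congr rfl fun u _ => by rw [map_pow, hg, map_pow]
      rw [this, hP2, map_zero]
    rw [hPk] at hz
    split_ifs at hz with he
    · rw [map_mul, map_pow, map_mul, hP2', mul_zero, zero_pow, mul_zero, sub_zero] at hz
      · exact hφinj (by rw [hz, map_zero])
      · obtain ⟨m, hm⟩ := he
        omega
    · rw [map_zero, sub_zero] at hz
      exact hφinj (by rw [hz, map_zero])


end Poly


end Stmt13Aux

theorem stmt_13 {p : ℕ} (hp : p.Prime) (hodd : Odd p)
    {F : Type*} [Field F] [Fintype F] [DecidableEq F]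
    (hcard : Fintype.card F = p)
    (U : Finset (F × F × F))
    (hUcard : U.card = p ^ 2 - 2)
    (hU : NoDetermine U)
    (hsum : ∑ u ∈ U, u = 0)
    (v : F × F × F) (hv : v ≠ 0)
    (hsig : sigmaU U v 2 = 0) :
    (((U.filter (fun a => dot3 v a + 0 = 0)).card : F) = -2) ∧
      ∀ x : F, x ≠ 0 → ((U.filter (fun a => dot3 v a + x = 0)).card : F) = 0 := by
  classical
  have hchar : (p : F) = 0 := by rw [← hcard]; exact FiniteField.cast_card_eq_zero F
  have h2 : (2 : F) ≠ 0 := by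
    intro h
    obtain ⟨m, hm⟩ := hodd
    have h1 : (p : F) = 1 := by rw [hm]; push_cast; rw [h]; ring
    rw [hchar] at h1
    exact zero_ne_one h1
  have hp2 : p ≠ 2 := by
    rintro rfl
    exact (by decide : ¬ Odd 2) hodd
  have hp3 : 3 ≤ p := by
    have := hp.two_le
    omega
  have hs1 : ∑ u ∈ U, dot3 u v = 0 := by
    rw [Stmt13Aux.sum_dot3, hsum]; simp [dot3]
  have hP2 : ∑ u ∈ U, (dot3 u v) ^ 2 = 0 := by
    have hL := Stmt13Aux.esymm_two (U.val.map (fun u => dot3 u v))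
    have hsum' : (U.val.map (fun u => dot3 u v)).sum = ∑ u ∈ U, dot3 u v := rfl
    have hsq : ((U.val.map (fun u => dot3 u v)).map (fun a => a ^ 2)).sum
        = ∑ u ∈ U, (dot3 u v) ^ 2 := by
      rw [Multiset.map_map]; rfl
    rw [hsum', hsq, hs1] at hL
    have hsig' : (U.val.map (fun u => dot3 u v)).esymm 2 = 0 := hsig
    rw [hsig', mul_zero] at hL
    linear_combination hL
  have hpk : ∀ k, 1 ≤ k → k ≤ p - 1 → ∑ u ∈ U, (dot3 u v) ^ k = 0 := fun k hk1 hk2 =>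
    Stmt13Aux.psum_eq_zero hp hcard hchar h2 U hUcard hU hsum v hP2 k hk1 hk2
  have hcardF : (U.card : F) = -2 := by
    rw [hUcard]
    have h22 : 2 ≤ p ^ 2 := by nlinarith
    rw [Nat.cast_sub h22]
    push_cast
    rw [hchar]
    ring
  have hcount : ∀ y : F, ((U.filter (fun a => dot3 a v = y)).card : F)
      = -2 + 2 * y ^ (p - 1) := by
    intro y
    have hind : ∀ u ∈ U, (if dot3 u v = y then (1 : F) else 0)
        = 1 - (dot3 u v - y) ^ (p - 1) := by
      intro u _
      by_cases h : dot3 u v = y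
      · rw [if_pos h, h, sub_self, zero_pow (by omega), sub_zero]
      · rw [if_neg h, show (dot3 u v - y) ^ (p - 1) = 1 from by
          rw [← hcard]; exact FiniteField.pow_card_sub_one_eq_one _ (sub_ne_zero.mpr h)]
        ring
    have hbig : ∑ u ∈ U, (dot3 u v - y) ^ (p - 1) = -2 * y ^ (p - 1) := by
      have hexp : ∀ u ∈ U, (dot3 u v - y) ^ (p - 1)
          = ∑ i ∈ Finset.range (p - 1 + 1),
              (dot3 u v) ^ i * ((-y) ^ (p - 1 - i) * ((p - 1).choose i : F)) := by
        intro u _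
        rw [sub_eq_add_neg, add_pow]
        exact Finset.sum_congr rfl fun i _ => by ring
      rw [Finset.sum_congr rfl hexp, Finset.sum_comm]
      have hterm : ∀ i ∈ Finset.range (p - 1 + 1), i ≠ 0 →
          (∑ u ∈ U, (dot3 u v) ^ i * ((-y) ^ (p - 1 - i) * ((p - 1).choose i : F))) = 0 := by
        intro i hi hi0
        rw [← Finset.sum_mul]
        have hile := Finset.mem_range.mp hi
        rw [hpk i (by omega) (by omega)]
        ring
      rw [Finset.sum_eq_single_of_mem 0 (Finset.mem_range.mpr (by omega))
        (fun i hi hi0 => hterm i hi hi0)]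
      simp only [pow_zero, one_mul, Nat.sub_zero, Nat.choose_zero_right, Nat.cast_one, mul_one]
      rw [Finset.sum_const, nsmul_eq_mul, hcardF]
      have hev : Even (p - 1) := Nat.Odd.sub_odd hodd odd_one
      rw [hev.neg_pow]
    calc ((U.filter (fun a => dot3 a v = y)).card : F)
        = ∑ u ∈ U, (if dot3 u v = y then (1 : F) else 0) := by
          rw [Finset.sum_boole]
      _ = ∑ u ∈ U, (1 - (dot3 u v - y) ^ (p - 1)) := Finset.sum_congr rfl hind
      _ = (U.card : F) - ∑ u ∈ U, (dot3 u v - y) ^ (p - 1) := by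
          rw [Finset.sum_sub_distrib, Finset.sum_const, nsmul_eq_mul, mul_one]
      _ = -2 + 2 * y ^ (p - 1) := by rw [hcardF, hbig]; ring
  constructor
  · have hfe : (U.filter (fun a => dot3 v a + 0 = 0)) = (U.filter (fun a => dot3 a v = 0)) := by
      apply Finset.filter_congr
      intro a _
      rw [add_zero, Stmt13Aux.dot3_comm]
    rw [hfe, hcount 0, zero_pow (by omega), mul_zero, add_zero]
  · intro x hx
    have hfe : (U.filter (fun a => dot3 v a + x = 0)) = (U.filter (fun a => dot3 a v = -x)) := by
      apply Finset.filter_congr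
      intro a _
      rw [Stmt13Aux.dot3_comm]
      constructor
      · intro h; exact eq_neg_of_add_eq_zero_left h
      · intro h; rw [h]; ring
    rw [hfe, hcount (-x)]
    rw [show (-x) ^ (p - 1) = 1 from by
      rw [← hcard]; exact FiniteField.pow_card_sub_one_eq_one _ (neg_ne_zero.mpr hx)]
    ring
end

section
/- Let q = p be an odd prime and let U ⊆ F_p³ be a set of p² − 2 points that does not determine the points of C, with ∑_{u∈U} u = (0,0,0). Let (y,z,w) ∈ F_p³ be nonzero and suppose σ₂(y,z,w) is a nonzero square in F_p. Then for x ∈ F_p with x² = σ₂(y,z,w), |π(x,y,z,w) ∩ U| ≡ −1 (mod p), and for x ∈ F_p with x² ≠ σ₂(y,z,w), |π(x,y,z,w) ∩ U| ≡ 0 (mod p). -/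
open Polynomial Finset

namespace Stmt14


variable {F : Type*} [Field F]

lemma dot3_comm (u v : F × F × F) : dot3 u v = dot3 v u := by
  simp only [dot3]; ring

lemma sum_dot3 {ι : Type*} (s : Finset ι) (f : ι → F × F × F) (v : F × F × F) :
    ∑ u ∈ s, dot3 (f u) v = dot3 (∑ u ∈ s, f u) v := by
  simp only [dot3, Prod.fst_sum, Prod.snd_sum, Finset.sum_mul, ← Finset.sum_add_distrib]

/-- elementary symmetric 2 identity -/
lemma esymm_two (M : Multiset F) : M.esymm 2 * 2 = M.sum ^ 2 - (M.map (fun x => x ^ 2)).sum := by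
  induction M using Multiset.induction_on with
  | empty => simp [Multiset.esymm, Multiset.powersetCard_eq_empty 2 (s := (0 : Multiset F)) (by simp)]
  | cons a M ih =>
    have h2 : (a ::ₘ M).esymm 2 = M.esymm 2 + a * M.sum := by
      have hcons : (a ::ₘ M).powersetCard 2 = M.powersetCard 2 + (M.powersetCard 1).map (a ::ₘ ·) := by
        simpa using Multiset.powersetCard_cons 1 a M
      simp only [Multiset.esymm, hcons, Multiset.map_add, Multiset.sum_add]
      congr 1
      rw [Multiset.powersetCard_one]
      simp only [Multiset.map_map, Function.comp_def, Multiset.prod_cons, Multiset.prod_singleton]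
      simpa using (Multiset.sum_map_mul_left (s := M) (a := a) (f := id))
    rw [h2, add_mul, ih, Multiset.sum_cons, Multiset.map_cons, Multiset.sum_cons]
    ring

/-- the even binomial polynomial E -/
def Efun (p : ℕ) (S c : F) : F :=
  ∑ j ∈ Finset.range ((p - 1) / 2 + 1),
    2 * ((p - 1).choose (2 * j) : F) * S ^ j * c ^ (p - 1 - 2 * j)

lemma Efun_spec {p : ℕ} (hpe : Even (p - 1)) (α c : F) :
    Efun p (α ^ 2) c = (α + c) ^ (p - 1) + (α - c) ^ (p - 1) := by
  set n := p - 1 with hn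
  have key : ∀ k ∈ range (n + 1),
      (if Even k then 2 * (n.choose k : F) * α ^ k * c ^ (n - k) else 0)
      = α ^ k * c ^ (n - k) * (n.choose k : F) + α ^ k * (-c) ^ (n - k) * (n.choose k : F) := by
    intro k hk
    have hk' : k ≤ n := Nat.lt_succ_iff.mp (Finset.mem_range.mp hk)
    rcases Nat.even_or_odd k with he | ho
    · have hnk : Even (n - k) := (Nat.even_sub hk').mpr (by simp [hpe, he])
      rw [if_pos he, hnk.neg_pow]
      ring
    · have hnk : Odd (n - k) := Nat.Even.sub_odd hk' hpe ho
      rw [if_neg (by simpa using ho), hnk.neg_pow]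
      ring
  rw [add_pow, sub_eq_add_neg, add_pow, ← Finset.sum_add_distrib,
    ← Finset.sum_congr rfl key, ← Finset.sum_filter]
  unfold Efun
  rw [← hn]
  refine Finset.sum_nbij' (fun j => 2 * j) (fun k => k / 2) ?_ ?_ ?_ ?_ ?_
  · intro j hj
    simp only [Finset.mem_filter, Finset.mem_range] at *
    constructor
    · have : 2 * j ≤ 2 * (n / 2) := by omega
      have h2 : 2 * (n / 2) = n := Nat.two_mul_div_two_of_even hpe
      omega
    · exact even_two_mul j
  · intro k hk
    simp only [Finset.mem_filter, Finset.mem_range] at *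
    omega
  · intro j hj; omega
  · intro k hk
    simp only [Finset.mem_filter, Finset.mem_range] at hk
    obtain ⟨-, m, hm⟩ := hk
    omega
  · intro j hj
    rw [pow_mul]



variable {F : Type*} [Field F]

section Counting

variable [Fintype F] [DecidableEq F] {p : ℕ}

lemma sum_plane_zero (hcard : Fintype.card F = p) (c₁ c₂ : F) (hc : ¬(c₁ = 0 ∧ c₂ = 0))
    (g : F → F) : ∑ ab : F × F, g (ab.1 * c₁ + ab.2 * c₂) = 0 := by
  have hp0 : (p : F) = 0 := by rw [← hcard]; exact FiniteField.cast_card_eq_zero F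
  have hcast : ∀ G : F, ∑ _a : F, G = 0 := by
    intro G
    rw [Finset.sum_const, Finset.card_univ, hcard, nsmul_eq_mul, hp0, zero_mul]
  rw [Fintype.sum_prod_type]
  by_cases h2 : c₂ ≠ 0
  · have hinner : ∀ a : F, ∑ b : F, g (a * c₁ + b * c₂) = ∑ x : F, g x := by
      intro a
      exact Equiv.sum_comp ((Equiv.mulRight₀ c₂ h2).trans (Equiv.addLeft (a * c₁))) g
    simp_rw [hinner]
    exact hcast _
  · push_neg at h2
    have h1 : c₁ ≠ 0 := by tauto
    subst h2
    simp_rw [mul_zero, add_zero]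
    rw [Finset.sum_congr rfl fun x _ => hcast (g (x * c₁))]
    simp

lemma L1core (hcard : Fintype.card F = p) (hp2 : 2 ≤ p)
    (U : Finset (F × F × F)) (hUcard : U.card = p ^ 2 - 2)
    (hU : NoDetermine U) (hsum : ∑ u ∈ U, u = 0)
    (t : F × F × F)
    (π : F × F × F → F × F) (κ : F × F × F → F × F) (lift : F × F → F × F × F)
    (hπd : ∀ u v, dot3 v t = 0 → (π u).1 * (κ v).1 + (π u).2 * (κ v).2 = dot3 u v)
    (hπinj : ∀ u u', π u = π u' → quadQ (u - u') = 0)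
    (hκ0 : ∀ v, dot3 v t = 0 → κ v = 0 → v = 0)
    (hκzero : κ 0 = 0)
    (hκsurj : ∀ ab : F × F, ∃ v, dot3 v t = 0 ∧ κ v = ab)
    (hlift : ∀ ab v, dot3 v t = 0 → dot3 (lift ab) v = ab.1 * (κ v).1 + ab.2 * (κ v).2) :
    ∃ A : F × F × F, ∀ v, dot3 v t = 0 → ∀ g : F → F,
      ∑ u ∈ U, g (dot3 u v) = -(g (dot3 A v) + g (-dot3 A v)) := by
  have hp0 : (p : F) = 0 := by rw [← hcard]; exact FiniteField.cast_card_eq_zero F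
  have h2p2 : 2 ≤ p ^ 2 := by nlinarith
  have hUF : ((U.card : ℕ) : F) = -2 := by
    rw [hUcard, Nat.cast_sub h2p2]
    push_cast
    rw [hp0]
    ring
  have hinj : Set.InjOn π U := by
    intro u hu u' hu' h
    by_contra hne
    exact hU u hu u' hu' hne (hπinj _ _ h)
  have himg : (U.image π).card = p ^ 2 - 2 := by
    rw [Finset.card_image_of_injOn hinj, hUcard]
  have hKcard : ((Finset.univ : Finset (F × F)) \ U.image π).card = 2 := by
    rw [Finset.card_sdiff_of_subset (Finset.subset_univ _), Finset.card_univ, Fintype.card_prod, hcard,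
      himg]
    have : p * p = p ^ 2 := by ring
    omega
  obtain ⟨AA, BB, hABne, hKeq⟩ := Finset.card_eq_two.mp hKcard
  -- core sum identity
  have hS : ∀ v, dot3 v t = 0 → ∀ g : F → F,
      ∑ u ∈ U, g (dot3 u v) =
        -(g (AA.1 * (κ v).1 + AA.2 * (κ v).2) + g (BB.1 * (κ v).1 + BB.2 * (κ v).2)) := by
    intro v hv g
    by_cases hv0 : v = 0
    · subst hv0
      have hd : ∀ u : F × F × F, dot3 u 0 = 0 := by
        intro u; simp [dot3, Prod.fst_zero, Prod.snd_zero]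
      simp only [hd, hκzero, Prod.fst_zero, Prod.snd_zero, mul_zero, add_zero, zero_add]
      rw [Finset.sum_const, nsmul_eq_mul, hUF]
      ring
    · have hκv : ¬((κ v).1 = 0 ∧ (κ v).2 = 0) := by
        intro ⟨ha, hb⟩
        exact hv0 (hκ0 v hv (Prod.ext ha hb))
      have step1 : ∑ u ∈ U, g (dot3 u v)
          = ∑ ab ∈ U.image π, g (ab.1 * (κ v).1 + ab.2 * (κ v).2) := by
        rw [Finset.sum_image (fun x hx y hy h => hinj hx hy h)]
        exact Finset.sum_congr rfl fun u _ => by rw [hπd u v hv]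
      have step2 : ∑ ab ∈ U.image π, g (ab.1 * (κ v).1 + ab.2 * (κ v).2)
          = (∑ ab : F × F, g (ab.1 * (κ v).1 + ab.2 * (κ v).2))
            - ∑ ab ∈ (Finset.univ \ U.image π), g (ab.1 * (κ v).1 + ab.2 * (κ v).2) := by
        rw [eq_sub_iff_add_eq, add_comm, Finset.sum_sdiff (Finset.subset_univ _)]
      rw [step1, step2, sum_plane_zero hcard _ _ hκv, hKeq, Finset.sum_pair hABne]
      ring
  -- BB = -AA
  have hBA : BB = -AA := by
    have hid : ∀ v, dot3 v t = 0 →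
        (AA.1 + BB.1) * (κ v).1 + (AA.2 + BB.2) * (κ v).2 = 0 := by
      intro v hv
      have h0 : ∑ u ∈ U, dot3 u v = 0 := by
        rw [show (fun u => dot3 u v) = (fun u => dot3 (id u) v) from rfl]
        rw [sum_dot3 U id v]
        simp only [id]
        rw [hsum]
        simp [dot3]
      have := hS v hv id
      simp only [id] at this
      rw [h0] at this
      linear_combination this
    obtain ⟨v1, hv1, hκ1⟩ := hκsurj (1, 0)
    obtain ⟨v2, hv2, hκ2⟩ := hκsurj (0, 1)
    have e1 := hid v1 hv1
    have e2 := hid v2 hv2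
    rw [hκ1] at e1
    rw [hκ2] at e2
    simp only at e1 e2
    have : BB.1 = -AA.1 := by linear_combination e1
    have h2 : BB.2 = -AA.2 := by linear_combination e2
    exact Prod.ext (by simpa using this) (by simpa using h2)
  refine ⟨lift AA, fun v hv g => ?_⟩
  rw [hS v hv g, hlift AA v hv]
  subst hBA
  have : (-AA).1 * (κ v).1 + (-AA).2 * (κ v).2 = -(AA.1 * (κ v).1 + AA.2 * (κ v).2) := by
    simp only [Prod.fst_neg, Prod.snd_neg]; ring
  rw [this]

lemma L1 (hcard : Fintype.card F = p) (hp2 : 2 ≤ p)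
    (U : Finset (F × F × F)) (hUcard : U.card = p ^ 2 - 2)
    (hU : NoDetermine U) (hsum : ∑ u ∈ U, u = 0)
    (t : F × F × F) (ht0 : t ≠ 0) (htq : quadQ t = 0) :
    ∃ A : F × F × F, ∀ v, dot3 v t = 0 → ∀ g : F → F,
      ∑ u ∈ U, g (dot3 u v) = -(g (dot3 A v) + g (-dot3 A v)) := by
  by_cases h1 : t.1 ≠ 0
  · refine L1core hcard hp2 U hUcard hU hsum t
      (fun u => (u.2.1 - u.1 * t.2.1 * t.1⁻¹, u.2.2 - u.1 * t.2.2 * t.1⁻¹))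
      (fun v => (v.2.1, v.2.2)) (fun ab => (0, ab.1, ab.2)) ?_ ?_ ?_ ?_ ?_ ?_
    · intro u v hv
      simp only [dot3] at hv ⊢
      field_simp
      linear_combination (-u.1) * hv
    · intro u u' h
      have ha := congrArg Prod.fst h
      have hb := congrArg Prod.snd h
      simp only at ha hb
      have he : t.1⁻¹ * t.1 = 1 := inv_mul_cancel₀ h1
      have e1 : u.2.1 - u'.2.1 = (u.1 - u'.1) * t.1⁻¹ * t.2.1 := by linear_combination ha
      have e2 : u.2.2 - u'.2.2 = (u.1 - u'.1) * t.1⁻¹ * t.2.2 := by linear_combination hb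
      simp only [quadQ, Prod.fst_sub, Prod.snd_sub] at htq ⊢
      rw [e1, e2]
      linear_combination ((u.1 - u'.1) * t.1⁻¹)^2 * htq +
        ((u.1 - u'.1)^2 * t.1⁻¹ * t.2.2) * he
    · intro v hv h0
      have ha := congrArg Prod.fst h0
      have hb := congrArg Prod.snd h0
      simp only [Prod.fst_zero, Prod.snd_zero] at ha hb
      simp only [dot3, ha, hb, zero_mul, mul_zero, add_zero] at hv
      have : v.1 = 0 := by
        rcases mul_eq_zero.mp hv with h | h
        · exact h
        · exact absurd h h1
      exact Prod.ext this (Prod.ext ha hb)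
    · simp
    · intro ab
      refine ⟨(-(ab.1 * t.2.1 + ab.2 * t.2.2) * t.1⁻¹, ab.1, ab.2), ?_, rfl⟩
      simp only [dot3]
      field_simp
      ring
    · intro ab v hv
      simp only [dot3]
      ring
  · push_neg at h1
    have h21 : t.2.1 = 0 := by
      have : t.2.1 ^ 2 = 0 := by
        simp only [quadQ, h1, zero_mul] at htq
        linear_combination htq
      exact pow_eq_zero_iff (by norm_num) |>.mp this
    have h22 : t.2.2 ≠ 0 := by
      intro h
      exact ht0 (Prod.ext h1 (Prod.ext h21 h))
    refine L1core hcard hp2 U hUcard hU hsum t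
      (fun u => (u.1, u.2.1)) (fun v => (v.1, v.2.1)) (fun ab => (ab.1, ab.2, 0)) ?_ ?_ ?_ ?_ ?_ ?_
    · intro u v hv
      simp only [dot3, h1, h21, mul_zero, zero_mul, zero_add, add_zero] at hv ⊢
      have : v.2.2 = 0 := by
        rcases mul_eq_zero.mp hv with h | h
        · exact h
        · exact absurd h h22
      rw [this]
      ring
    · intro u u' h
      have ha := congrArg Prod.fst h
      have hb := congrArg Prod.snd h
      simp only at ha hb
      simp only [quadQ, Prod.fst_sub, Prod.snd_sub, ha, hb]
      ring
    · intro v hv h0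
      have ha := congrArg Prod.fst h0
      have hb := congrArg Prod.snd h0
      simp only [Prod.fst_zero, Prod.snd_zero] at ha hb
      simp only [dot3, h1, h21, ha, hb, zero_mul, mul_zero, add_zero, zero_add] at hv
      have : v.2.2 = 0 := by
        rcases mul_eq_zero.mp hv with h | h
        · exact h
        · exact absurd h h22
      exact Prod.ext ha (Prod.ext hb this)
    · simp
    · intro ab
      refine ⟨(ab.1, ab.2, 0), ?_, rfl⟩
      simp only [dot3, h1, h21]
      ring
    · intro ab v hv
      simp only [dot3]
      ring

end Counting



variable {F : Type*} [Field F]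

/-- total-degree-with-shift predicate for bivariate polynomials `F[Z][Y]` -/
def TDs (j n : ℕ) (P : Polynomial (Polynomial F)) : Prop :=
  ∀ i, P.coeff i = 0 ∨ i + j + (P.coeff i).natDegree ≤ n

lemma TDs_mono {j n n' : ℕ} {P : Polynomial (Polynomial F)} (h : n ≤ n') (hP : TDs j n P) :
    TDs j n' P := fun i => (hP i).imp id (fun hle => hle.trans h)

lemma TDs_zero (j n : ℕ) : TDs j n (0 : Polynomial (Polynomial F)) := fun i => Or.inl (by simp)

lemma TDs_add {j n : ℕ} {P Q : Polynomial (Polynomial F)} (hP : TDs j n P) (hQ : TDs j n Q) :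
    TDs j n (P + Q) := by
  intro i
  rcases hP i with h1 | h1 <;> rcases hQ i with h2 | h2
  · left; simp [coeff_add, h1, h2]
  · rcases eq_or_ne ((P + Q).coeff i) 0 with h | h
    · exact Or.inl h
    · right; rw [coeff_add, h1, zero_add]; exact h2
  · rcases eq_or_ne ((P + Q).coeff i) 0 with h | h
    · exact Or.inl h
    · right; rw [coeff_add, h2, add_zero]; exact h1
  · rcases eq_or_ne ((P + Q).coeff i) 0 with h | h
    · exact Or.inl h
    · right
      rw [coeff_add]
      have := Polynomial.natDegree_add_le (P.coeff i) (Q.coeff i)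
      omega

lemma TDs_sum {ι : Type*} [DecidableEq ι] {j n : ℕ} (s : Finset ι) (f : ι → Polynomial (Polynomial F))
    (h : ∀ i ∈ s, TDs j n (f i)) : TDs j n (∑ i ∈ s, f i) := by
  induction s using Finset.induction_on with
  | empty => simpa using TDs_zero j n
  | insert _ _ hm ih =>
    rw [Finset.sum_insert hm]
    exact TDs_add (h _ (Finset.mem_insert_self _ _))
      (ih fun i hi => h i (Finset.mem_insert_of_mem hi))

lemma TDs_mul {a b : ℕ} {P Q : Polynomial (Polynomial F)} (hP : TDs 0 a P) (hQ : TDs 0 b Q) :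
    TDs 0 (a + b) (P * Q) := by
  intro k
  by_cases hk2 : k ≤ a + b
  · rcases eq_or_ne ((P * Q).coeff k) 0 with h | h
    · exact Or.inl h
    · right
      rw [coeff_mul]
      have hdeg : ((∑ x ∈ antidiagonal k, P.coeff x.1 * Q.coeff x.2)).natDegree ≤ a + b - k := by
        apply Polynomial.natDegree_sum_le_of_forall_le
        intro x hx
        have hxk : x.1 + x.2 = k := Finset.HasAntidiagonal.mem_antidiagonal.mp hx
        rcases hP x.1 with h1 | h1
        · simp [h1]
        · rcases hQ x.2 with h2 | h2
          · simp [h2]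
          · have := Polynomial.natDegree_mul_le (p := P.coeff x.1) (q := Q.coeff x.2)
            omega
      omega
  · left
    rw [coeff_mul]
    apply Finset.sum_eq_zero
    intro x hx
    have hxk : x.1 + x.2 = k := Finset.HasAntidiagonal.mem_antidiagonal.mp hx
    have : a < x.1 ∨ b < x.2 := by omega
    rcases this with h | h
    · rcases hP x.1 with h1 | h1
      · rw [h1, zero_mul]
      · omega
    · rcases hQ x.2 with h2 | h2
      · rw [h2, mul_zero]
      · omega

lemma TDs_pow {a k : ℕ} {P : Polynomial (Polynomial F)} (hP : TDs 0 a P) :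
    TDs 0 (a * k) (P ^ k) := by
  induction k with
  | zero =>
    intro i
    rcases eq_or_ne i 0 with rfl | hi
    · right; simp
    · left; simp [coeff_one, hi]
  | succ k ih =>
    rw [pow_succ, Nat.mul_succ]
    exact TDs_mul ih hP

lemma TDs_C {d : ℕ} (q : Polynomial F) (h : q.natDegree ≤ d) :
    TDs 0 d (C q : Polynomial (Polynomial F)) := by
  intro i
  rcases eq_or_ne i 0 with rfl | hi
  · right; simpa using h
  · left; simp [coeff_C, hi]

lemma TDs_X : TDs 0 1 (X : Polynomial (Polynomial F)) := by
  intro i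
  rcases eq_or_ne i 1 with rfl | hi
  · right; simp
  · left; rw [coeff_X, if_neg (fun h => hi h.symm)]

/-- quotient degree bound when dividing by a monic linear `Y - C ψ` -/
lemma TDs_step (ψ : Polynomial F) (hψ : ψ.natDegree ≤ 1) (R : Polynomial (Polynomial F))
    (j n : ℕ) (h : TDs j n ((X - C ψ) * R)) : TDs (j + 1) n R := by
  have hrec : ∀ i, R.coeff i = ((X - C ψ) * R).coeff (i + 1) + ψ * R.coeff (i + 1) := by
    intro i
    rw [sub_mul, coeff_sub, coeff_X_mul, coeff_C_mul]
    ring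
  have main : ∀ d i, R.natDegree + 1 ≤ i + d →
      (R.coeff i = 0 ∨ i + (j + 1) + (R.coeff i).natDegree ≤ n) := by
    intro d
    induction d with
    | zero =>
      intro i hi
      left
      exact coeff_eq_zero_of_natDegree_lt (by omega)
    | succ d ih =>
      intro i hi
      by_cases hbig : R.natDegree + 1 ≤ i
      · left; exact coeff_eq_zero_of_natDegree_lt (by omega)
      · have hB := ih (i + 1) (by omega)
        have hA := h (i + 1)
        rcases hA with hA0 | hAle <;> rcases hB with hB0 | hBle
        · left; rw [hrec i, hA0, hB0, mul_zero, add_zero]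
        · rcases eq_or_ne (R.coeff i) 0 with hz | hz
          · exact Or.inl hz
          · right
            rw [hrec i, hA0, zero_add]
            have h1 := Polynomial.natDegree_mul_le (p := ψ) (q := R.coeff (i + 1))
            omega
        · rcases eq_or_ne (R.coeff i) 0 with hz | hz
          · exact Or.inl hz
          · right
            rw [hrec i, hB0, mul_zero, add_zero]
            omega
        · rcases eq_or_ne (R.coeff i) 0 with hz | hz
          · exact Or.inl hz
          · right
            rw [hrec i]
            have h1 := Polynomial.natDegree_add_le (((X - C ψ) * R).coeff (i + 1))
              (ψ * R.coeff (i + 1))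
            have h2 := Polynomial.natDegree_mul_le (p := ψ) (q := R.coeff (i + 1))
            omega
  intro i
  exact main (R.natDegree + 1) i (by omega)

lemma hom_eval' {R S : Type*} [CommSemiring R] [CommSemiring S] (f : R →+* S)
    (p : Polynomial R) (x : R) : f (p.eval x) = p.eval₂ f (f x) := by
  rw [Polynomial.eval, Polynomial.hom_eval₂]
  simp

lemma poly_vanish [Fintype F] [DecidableEq F] {p : ℕ} (hcard : Fintype.card F = p)
    {n : ℕ} (hn : n < p) (P : Polynomial (Polynomial F)) (hTD : TDs 0 n P)
    (hvan : ∀ m z : F, eval₂ (evalRingHom z) (-(m * z + m ^ 2)) P = 0) :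
    P = 0 := by
  set ψ : F → Polynomial F := fun m => -(C m * X + C (m ^ 2)) with hψdef
  have hψdeg : ∀ m, (ψ m).natDegree ≤ 1 := by
    intro m
    rw [hψdef]
    simp only [natDegree_neg]
    refine (Polynomial.natDegree_add_le _ _).trans ?_
    simp only [natDegree_C, max_le_iff]
    constructor
    · exact (Polynomial.natDegree_C_mul_le m X).trans (by simp)
    · omega
  have hψeval : ∀ m z : F, (ψ m).eval z = -(m * z + m ^ 2) := by
    intro m z
    simp [hψdef]
  have key : ∀ s : Finset F, ∃ R, P = (∏ m ∈ s, (X - C (ψ m))) * R ∧ TDs s.card n R := by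
    intro s
    induction s using Finset.induction_on with
    | empty => exact ⟨P, by simp, by simpa using hTD⟩
    | @insert m s hm ih =>
      obtain ⟨R, hPR, hR⟩ := ih
      by_cases hcase : s.card ≤ n
      · have hroot : R.eval (ψ m) = 0 := by
          set r := R.eval (ψ m) with hr
          have hdeg : r.natDegree ≤ n - s.card := by
            rw [hr, Polynomial.eval_eq_sum_range]
            apply Polynomial.natDegree_sum_le_of_forall_le
            intro i _
            rcases hR i with h0 | hle
            · simp [h0]
            · refine (Polynomial.natDegree_mul_le).trans ?_
              have h1 := Polynomial.natDegree_pow_le (p := ψ m) (n := i)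
              have h2 := hψdeg m
              have h3 : i * (ψ m).natDegree ≤ i := by
                calc i * (ψ m).natDegree ≤ i * 1 := Nat.mul_le_mul_left i h2
                _ = i := Nat.mul_one i
              omega
          by_contra hr0
          have hzs : ∀ z : F, z ∉ s.image (fun m' => -(m + m')) → r.eval z = 0 := by
            intro z hz
            have h0 := hvan m z
            set y₀ : F := -(m * z + m ^ 2) with hy₀
            have hEvP : eval₂ (evalRingHom z) y₀ P
                = (∏ m' ∈ s, ((m' - m) * (z + m + m'))) * (r.eval z) := by
              rw [hPR]
              rw [show eval₂ (evalRingHom z) y₀ ((∏ m' ∈ s, (X - C (ψ m'))) * R)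
                  = (eval₂RingHom (evalRingHom z) y₀) ((∏ m' ∈ s, (X - C (ψ m'))) * R) from rfl]
              rw [map_mul, map_prod]
              congr 1
              · apply Finset.prod_congr rfl
                intro m' _
                rw [show (eval₂RingHom (evalRingHom z) y₀) (X - C (ψ m'))
                    = eval₂ (evalRingHom z) y₀ (X - C (ψ m')) from rfl]
                rw [Polynomial.eval₂_sub, Polynomial.eval₂_X, Polynomial.eval₂_C]
                rw [show (evalRingHom z) (ψ m') = (ψ m').eval z from rfl, hψeval, hy₀]
                ring
              · rw [hr, show (eval₂RingHom (evalRingHom z) y₀) R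
                    = eval₂ (evalRingHom z) y₀ R from rfl]
                calc eval₂ (evalRingHom z) y₀ R
                    = eval₂ (evalRingHom z) ((evalRingHom z) (ψ m)) R := by
                      rw [show (evalRingHom z) (ψ m) = (ψ m).eval z from rfl, hψeval]
                  _ = (evalRingHom z) (R.eval (ψ m)) := (hom_eval' _ _ _).symm
                  _ = eval z (eval (ψ m) R) := rfl
            rw [h0] at hEvP
            have hprod : (∏ m' ∈ s, ((m' - m) * (z + m + m'))) ≠ 0 := by
              apply Finset.prod_ne_zero_iff.mpr
              intro m' hm'
              apply mul_ne_zero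
              · intro h
                apply hm
                have : m' = m := by linear_combination h
                rwa [← this]
              · intro h
                apply hz
                rw [Finset.mem_image]
                exact ⟨m', hm', by linear_combination -h⟩
            rcases mul_eq_zero.mp hEvP.symm with h | h
            · exact absurd h hprod
            · exact h
          have hsub : Finset.univ \ s.image (fun m' => -(m + m')) ⊆ r.roots.toFinset := by
            intro z hzmem
            rw [Multiset.mem_toFinset, Polynomial.mem_roots']
            exact ⟨hr0, hzs z (Finset.mem_sdiff.mp hzmem).2⟩
          have hc1 : p - s.card ≤ (Finset.univ \ s.image (fun m' => -(m + m'))).card := by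
            rw [Finset.card_sdiff_of_subset (Finset.subset_univ _), Finset.card_univ, hcard]
            have := Finset.card_image_le (s := s) (f := fun m' => -(m + m'))
            omega
          have hc2 := Finset.card_le_card hsub
          have hc3 := (Multiset.toFinset_card_le r.roots).trans (Polynomial.card_roots' r)
          omega
        obtain ⟨R', hR'⟩ := Polynomial.dvd_iff_isRoot.mpr hroot
        refine ⟨R', ?_, ?_⟩
        · rw [Finset.prod_insert hm, hPR, hR']
          ring
        · rw [Finset.card_insert_of_notMem hm]
          exact TDs_step (ψ m) (hψdeg m) R' s.card n (hR' ▸ hR)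
      · have hR0 : R = 0 := by
          apply Polynomial.ext
          intro i
          rcases hR i with h0 | hle
          · simp [h0]
          · omega
        exact ⟨0, by rw [hPR, hR0, mul_zero, mul_zero],
          fun i => Or.inl (by simp)⟩
  obtain ⟨R, hPR, hR⟩ := key Finset.univ
  have hcardu : (Finset.univ : Finset F).card = p := by rw [Finset.card_univ, hcard]
  have hR0 : R = 0 := by
    apply Polynomial.ext
    intro i
    rcases hR i with h0 | hle
    · simp [h0]
    · rw [hcardu] at hle
      omega
  rw [hPR, hR0, mul_zero]


section Assembly

variable [Fintype F] [DecidableEq F] {p : ℕ}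

lemma Efun_scale {p : ℕ} (hpe : Even (p - 1)) (lam S c : F) :
    Efun p (lam ^ 2 * S) (lam * c) = lam ^ (p - 1) * Efun p S c := by
  unfold Efun
  rw [Finset.mul_sum]
  apply Finset.sum_congr rfl
  intro j hj
  have hj2 : 2 * j ≤ p - 1 := by
    have h1 := Finset.mem_range.mp hj
    obtain ⟨k, hk⟩ := hpe
    omega
  rw [mul_pow, mul_pow, ← pow_mul]
  rw [show (2 : F) * ((p - 1).choose (2 * j) : F) * (lam ^ (2 * j) * S ^ j)
      * (lam ^ (p - 1 - 2 * j) * c ^ (p - 1 - 2 * j))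
      = (lam ^ (2 * j) * lam ^ (p - 1 - 2 * j))
        * (2 * ((p - 1).choose (2 * j) : F) * S ^ j * c ^ (p - 1 - 2 * j)) from by ring]
  rw [← pow_add, show 2 * j + (p - 1 - 2 * j) = p - 1 from by omega]

/-- `sigmaU U v 2` in terms of the power sum, assuming `∑ u = 0`. -/
lemma sigmaU_eq (h2 : (2 : F) ≠ 0) (U : Finset (F × F × F)) (hsum : ∑ u ∈ U, u = 0)
    (v : F × F × F) : sigmaU U v 2 = -(2⁻¹ : F) * ∑ u ∈ U, (dot3 u v) ^ 2 := by
  have hs1 : (U.val.map (fun u => dot3 u v)).sum = 0 := by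
    rw [show (U.val.map (fun u => dot3 u v)).sum = ∑ u ∈ U, dot3 u v from rfl]
    rw [show (fun u => dot3 u v) = (fun u => dot3 (id u) v) from rfl, sum_dot3 U id v]
    simp only [id]
    rw [hsum]
    simp [dot3]
  have hs2 : ((U.val.map (fun u => dot3 u v)).map (fun x => x ^ 2)).sum
      = ∑ u ∈ U, (dot3 u v) ^ 2 := by
    rw [Multiset.map_map]
    rfl
  have h0 := esymm_two (U.val.map (fun u => dot3 u v))
  rw [hs1, hs2] at h0
  rw [show sigmaU U v 2 = (U.val.map (fun u => dot3 u v)).esymm 2 from rfl]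
  field_simp at h0 ⊢
  linear_combination h0

/-- the bivariate polynomial for the slice w = 1 -/
noncomputable def linY (u : F × F × F) (x' : F) : Polynomial (Polynomial F) :=
  C (C u.1) * X + C (C u.2.1 * X + C (u.2.2 + x'))

noncomputable def sigPoly (U : Finset (F × F × F)) : Polynomial (Polynomial F) :=
  C (C (-(2⁻¹ : F))) * ∑ u ∈ U, (linY u 0) ^ 2

noncomputable def Ppoly (p : ℕ) (U : Finset (F × F × F)) (x' : F) : Polynomial (Polynomial F) :=
  (∑ u ∈ U, (linY u x') ^ (p - 1)) +
    ∑ j ∈ Finset.range ((p - 1) / 2 + 1),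
      C (C (2 * ((p - 1).choose (2 * j) : F) * x' ^ (p - 1 - 2 * j))) * (sigPoly U) ^ j

lemma deg_linear (a b : F) : (C a * X + C b : Polynomial F).natDegree ≤ 1 := by
  refine (Polynomial.natDegree_add_le _ _).trans ?_
  simp only [natDegree_C, max_le_iff]
  exact ⟨(Polynomial.natDegree_C_mul_le a X).trans (by simp), by omega⟩

lemma TD_linY (u : F × F × F) (x' : F) : TDs 0 1 (linY u x') := by
  unfold linY
  have h1 : TDs 0 1 (C (C u.1) * X : Polynomial (Polynomial F)) := by
    have := TDs_mul (a := 0) (b := 1) (TDs_C (C u.1) (by simp)) TDs_X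
    simpa using this
  exact TDs_add h1 (TDs_C _ (deg_linear _ _))

lemma TD_Ppoly (hpe : Even (p - 1)) (U : Finset (F × F × F)) (x' : F) :
    TDs 0 (p - 1) (Ppoly p U x') := by
  unfold Ppoly
  apply TDs_add
  · apply TDs_sum
    intro u _
    have := TDs_pow (k := p - 1) (TD_linY u x')
    simpa using this
  · apply TDs_sum
    intro j hj
    have hj2 : 2 * j ≤ p - 1 := by
      have h1 := Finset.mem_range.mp hj
      obtain ⟨k, hk⟩ := hpe
      omega
    have hsig : TDs 0 2 (sigPoly U) := by
      unfold sigPoly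
      have h2 : TDs 0 2 (∑ u ∈ U, (linY u 0) ^ 2) := by
        apply TDs_sum
        intro u _
        have := TDs_pow (k := 2) (TD_linY u 0)
        simpa using this
      have := TDs_mul (a := 0) (b := 2) (TDs_C (C (-(2⁻¹ : F))) (le_of_eq (natDegree_C _))) h2
      simpa using this
    have hpow := TDs_pow (k := j) hsig
    have := TDs_mul (a := 0) (b := 2 * j)
      (TDs_C (C (2 * ((p - 1).choose (2 * j) : F) * x' ^ (p - 1 - 2 * j)))
        (le_of_eq (natDegree_C _))) hpow
    refine TDs_mono hj2 ?_
    simpa using this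

/-- evaluation of the pieces -/
lemma ev_linY (u : F × F × F) (x' y z : F) :
    eval₂ (evalRingHom z) y (linY u x') = dot3 u (y, z, 1) + x' := by
  unfold linY
  rw [Polynomial.eval₂_add, Polynomial.eval₂_mul, Polynomial.eval₂_C, Polynomial.eval₂_X,
    Polynomial.eval₂_C]
  rw [show (evalRingHom z) (C u.1) = (C u.1 : Polynomial F).eval z from rfl,
    show (evalRingHom z) (C u.2.1 * X + C (u.2.2 + x')) = (C u.2.1 * X + C (u.2.2 + x') : Polynomial F).eval z from rfl]
  simp only [eval_C, eval_add, eval_mul, eval_X]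
  simp only [dot3]
  ring

lemma ev_sigPoly (U : Finset (F × F × F)) (y z : F) :
    eval₂ (evalRingHom z) y (sigPoly U)
      = -(2⁻¹ : F) * ∑ u ∈ U, (dot3 u (y, z, 1)) ^ 2 := by
  unfold sigPoly
  rw [show eval₂ (evalRingHom z) y (C (C (-(2⁻¹ : F))) * ∑ u ∈ U, (linY u 0) ^ 2)
      = (eval₂RingHom (evalRingHom z) y) (C (C (-(2⁻¹ : F))) * ∑ u ∈ U, (linY u 0) ^ 2) from rfl]
  rw [map_mul, map_sum]
  congr 1
  · rw [show (eval₂RingHom (evalRingHom z) y) (C (C (-(2⁻¹ : F))))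
        = eval₂ (evalRingHom z) y (C (C (-(2⁻¹ : F)))) from rfl, Polynomial.eval₂_C]
    simp
  · apply Finset.sum_congr rfl
    intro u _
    rw [map_pow]
    rw [show (eval₂RingHom (evalRingHom z) y) (linY u 0)
        = eval₂ (evalRingHom z) y (linY u 0) from rfl, ev_linY]
    rw [add_zero]

lemma ev_Ppoly (U : Finset (F × F × F)) (x' y z : F) :
    eval₂ (evalRingHom z) y (Ppoly p U x')
      = (∑ u ∈ U, (dot3 u (y, z, 1) + x') ^ (p - 1))
        + Efun p (-(2⁻¹ : F) * ∑ u ∈ U, (dot3 u (y, z, 1)) ^ 2) x' := by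
  unfold Ppoly
  rw [show eval₂ (evalRingHom z) y _ = (eval₂RingHom (evalRingHom z) y) _ from rfl]
  rw [map_add, map_sum, map_sum]
  congr 1
  · apply Finset.sum_congr rfl
    intro u _
    rw [map_pow]
    rw [show (eval₂RingHom (evalRingHom z) y) (linY u x')
        = eval₂ (evalRingHom z) y (linY u x') from rfl, ev_linY]
  · unfold Efun
    apply Finset.sum_congr rfl
    intro j _
    rw [map_mul, map_pow]
    rw [show (eval₂RingHom (evalRingHom z) y)
          (C (C (2 * ((p - 1).choose (2 * j) : F) * x' ^ (p - 1 - 2 * j))))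
        = eval₂ (evalRingHom z) y
          (C (C (2 * ((p - 1).choose (2 * j) : F) * x' ^ (p - 1 - 2 * j)))) from rfl,
      Polynomial.eval₂_C]
    rw [show (eval₂RingHom (evalRingHom z) y) (sigPoly U)
        = eval₂ (evalRingHom z) y (sigPoly U) from rfl, ev_sigPoly]
    rw [show (evalRingHom z) (C (2 * ((p - 1).choose (2 * j) : F) * x' ^ (p - 1 - 2 * j)))
        = (C (2 * ((p - 1).choose (2 * j) : F) * x' ^ (p - 1 - 2 * j)) : Polynomial F).eval z
          from rfl, eval_C]
    ring

lemma key_slice (hp : p.Prime) (hodd : Odd p) (hcard : Fintype.card F = p)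
    (h2 : (2 : F) ≠ 0)
    (U : Finset (F × F × F)) (hUcard : U.card = p ^ 2 - 2)
    (hU : NoDetermine U) (hsum : ∑ u ∈ U, u = 0) (x' : F) :
    Ppoly p U x' = 0 := by
  have hpe : Even (p - 1) := by
    obtain ⟨k, hk⟩ := hodd
    exact ⟨k, by omega⟩
  have hp2 : 2 ≤ p := hp.two_le
  apply poly_vanish hcard (n := p - 1) (by omega) _ (TD_Ppoly hpe U x')
  intro m z
  rw [ev_Ppoly]
  set v : F × F × F := (-(m * z + m ^ 2), z, 1) with hv
  have htm0 : ((1 : F), m, m ^ 2) ≠ 0 := by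
    intro h
    have := congrArg Prod.fst h
    simp at this
  have htm : quadQ ((1 : F), m, m ^ 2) = 0 := by simp [quadQ]
  obtain ⟨A, hA⟩ := L1 hcard hp2 U hUcard hU hsum ((1 : F), m, m ^ 2) htm0 htm
  have hvperp : dot3 v ((1 : F), m, m ^ 2) = 0 := by
    simp only [hv, dot3]
    ring
  have hS := hA v hvperp (fun w => (w + x') ^ (p - 1))
  have hsq := hA v hvperp (fun w => w ^ 2)
  have hSig : -(2⁻¹ : F) * ∑ u ∈ U, (dot3 u v) ^ 2 = (dot3 A v) ^ 2 := by
    rw [hsq]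
    field_simp
    ring
  rw [hS, hSig, Efun_spec hpe (dot3 A v) x']
  have hneg : (-(dot3 A v) + x') ^ (p - 1) = (dot3 A v - x') ^ (p - 1) := by
    rw [show (-(dot3 A v) + x') = -(dot3 A v - x') from by ring, Even.neg_pow hpe]
  rw [hneg]
  ring

lemma count_formula (hp : p.Prime) (hodd : Odd p) (hcard : Fintype.card F = p)
    (U : Finset (F × F × F)) (hUcard : U.card = p ^ 2 - 2)
    (hU : NoDetermine U) (hsum : ∑ u ∈ U, u = 0)
    (v : F × F × F) (x : F) :
    ((U.filter (fun a => dot3 v a + x = 0)).card : F)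
      = -2 + Efun p (sigmaU U v 2) x := by
  have hp2 : 2 ≤ p := hp.two_le
  have hpe : Even (p - 1) := by
    obtain ⟨k, hk⟩ := hodd
    exact ⟨k, by omega⟩
  have hp0 : ((p : ℕ) : F) = 0 := by rw [← hcard]; exact FiniteField.cast_card_eq_zero F
  have h2 : (2 : F) ≠ 0 := by
    intro h2
    obtain ⟨k, hk⟩ := hodd
    rw [hk] at hp0
    push_cast at hp0
    rw [h2] at hp0
    simp at hp0
  have hq1 : ∀ a : F, a ≠ 0 → a ^ (p - 1) = 1 := by
    intro a ha
    have := FiniteField.pow_card_sub_one_eq_one a ha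
    rwa [hcard] at this
  have hUF : ((U.card : ℕ) : F) = -2 := by
    have h2p2 : 2 ≤ p ^ 2 := by nlinarith
    rw [hUcard, Nat.cast_sub h2p2]
    push_cast
    rw [hp0]
    ring
  -- the key power-sum identity
  have hSval : ∑ u ∈ U, (dot3 u v + x) ^ (p - 1) = -(Efun p (sigmaU U v 2) x) := by
    by_cases hw : v.2.2 = 0
    · -- direct case t = (0,0,1)
      set t0 : F × F × F := ((0 : F), (0 : F), (1 : F)) with ht0def
      have ht0 : t0 ≠ 0 := by
        intro h
        have := congrArg (fun w : F × F × F => w.2.2) h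
        simp [ht0def] at this
      have htq : quadQ t0 = 0 := by simp [quadQ, ht0def]
      obtain ⟨A, hA⟩ := L1 hcard hp2 U hUcard hU hsum t0 ht0 htq
      have hperp : dot3 v t0 = 0 := by simp [dot3, ht0def, hw]
      have hS := hA v hperp (fun w => (w + x) ^ (p - 1))
      have hsq := hA v hperp (fun w => w ^ 2)
      have hSig : sigmaU U v 2 = (dot3 A v) ^ 2 := by
        rw [sigmaU_eq h2 U hsum v, hsq]
        field_simp
        ring
      rw [hS, hSig, Efun_spec hpe (dot3 A v) x]
      have hneg : (-(dot3 A v) + x) ^ (p - 1) = (dot3 A v - x) ^ (p - 1) := by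
        rw [show (-(dot3 A v) + x) = -(dot3 A v - x) from by ring, Even.neg_pow hpe]
      rw [hneg]
    · -- scaling case
      set lam := v.2.2 with hlam
      set v' : F × F × F := (lam⁻¹ * v.1, lam⁻¹ * v.2.1, 1) with hv'
      set x' := lam⁻¹ * x with hx'
      have hdot : ∀ u, dot3 u v = lam * dot3 u v' := by
        intro u
        simp only [dot3, hv']
        field_simp
        rfl
      have hx : x = lam * x' := by
        rw [hx']
        field_simp
      have hlam1 : lam ^ (p - 1) = 1 := hq1 lam hw
      have h0 : eval₂ (evalRingHom (lam⁻¹ * v.2.1)) (lam⁻¹ * v.1) (Ppoly p U x') = 0 := by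
        rw [key_slice hp hodd hcard h2 U hUcard hU hsum x']
        simp
      rw [ev_Ppoly] at h0
      have hS' : ∑ u ∈ U, (dot3 u v' + x') ^ (p - 1)
          = -(Efun p (-(2⁻¹ : F) * ∑ u ∈ U, (dot3 u v') ^ 2) x') := by
        linear_combination h0
      have hstep1 : ∑ u ∈ U, (dot3 u v + x) ^ (p - 1)
          = ∑ u ∈ U, (dot3 u v' + x') ^ (p - 1) := by
        apply Finset.sum_congr rfl
        intro u _
        rw [hdot u, hx, show lam * dot3 u v' + lam * x' = lam * (dot3 u v' + x') from by ring,
          mul_pow, hlam1, one_mul]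
      have hstep2 : sigmaU U v 2 = lam ^ 2 * (-(2⁻¹ : F) * ∑ u ∈ U, (dot3 u v') ^ 2) := by
        rw [sigmaU_eq h2 U hsum v]
        have hsum2 : ∑ u ∈ U, (dot3 u v) ^ 2 = lam ^ 2 * ∑ u ∈ U, (dot3 u v') ^ 2 := by
          rw [Finset.mul_sum]
          apply Finset.sum_congr rfl
          intro u _
          rw [hdot u]
          ring
        rw [hsum2]
        ring
      rw [hstep1, hS', hstep2, hx, Efun_scale hpe lam _ x', hlam1, one_mul]
  -- the count
  have hcount : ((U.filter (fun a => dot3 v a + x = 0)).card : F)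
      = ∑ u ∈ U, (1 - (dot3 u v + x) ^ (p - 1)) := by
    rw [Finset.card_filter]
    push_cast
    apply Finset.sum_congr rfl
    intro u _
    by_cases hz : dot3 u v + x = 0
    · rw [if_pos (by rw [dot3_comm]; exact hz), hz, zero_pow (by omega), sub_zero]
    · rw [if_neg (by rw [dot3_comm]; exact hz), hq1 _ hz, sub_self]
  rw [hcount, Finset.sum_sub_distrib, Finset.sum_const, hSval, nsmul_eq_mul, hUF]
  ring

end Assembly

end Stmt14

theorem stmt_14 {p : ℕ} (hp : p.Prime) (hodd : Odd p)
    {F : Type*} [Field F] [Fintype F] [DecidableEq F]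
    (hcard : Fintype.card F = p)
    (U : Finset (F × F × F))
    (hUcard : U.card = p ^ 2 - 2)
    (hU : NoDetermine U)
    (hsum : ∑ u ∈ U, u = 0)
    (v : F × F × F) (hv : v ≠ 0)
    (hsig : ∃ s : F, s ≠ 0 ∧ s ^ 2 = sigmaU U v 2) :
    ∀ x : F,
      (x ^ 2 = sigmaU U v 2 → ((U.filter (fun a => dot3 v a + x = 0)).card : F) = -1) ∧
      (x ^ 2 ≠ sigmaU U v 2 → ((U.filter (fun a => dot3 v a + x = 0)).card : F) = 0) := by
  intro x
  obtain ⟨s, hs0, hs2⟩ := hsig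
  have hpe : Even (p - 1) := by obtain ⟨k, hk⟩ := hodd; exact ⟨k, by omega⟩
  have hp2 : 2 ≤ p := hp.two_le
  have hp0 : ((p : ℕ) : F) = 0 := by rw [← hcard]; exact FiniteField.cast_card_eq_zero F
  have h2 : (2 : F) ≠ 0 := by
    intro h2
    obtain ⟨k, hk⟩ := hodd
    rw [hk] at hp0
    push_cast at hp0
    rw [h2] at hp0
    simp at hp0
  have hq1 : ∀ a : F, a ≠ 0 → a ^ (p - 1) = 1 := fun a ha => by
    have := FiniteField.pow_card_sub_one_eq_one a ha
    rwa [hcard] at this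
  have hN := Stmt14.count_formula hp hodd hcard U hUcard hU hsum v x
  rw [← hs2, Stmt14.Efun_spec hpe s x] at hN
  constructor
  · intro hx
    have hx2 : x ^ 2 = s ^ 2 := by rw [hx, ← hs2]
    rw [hN]
    have hfac : (x - s) * (x + s) = 0 := by linear_combination hx2
    have h2s : (2 : F) * s ≠ 0 := mul_ne_zero h2 hs0
    rcases mul_eq_zero.mp hfac with h | h
    · have h1 : s + x = 2 * s := by linear_combination h
      have h2' : s - x = 0 := by linear_combination -h
      rw [h1, h2', hq1 _ h2s, zero_pow (by omega)]
      ring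
    · have h1 : s + x = 0 := by linear_combination h
      have h2' : s - x = 2 * s := by linear_combination -h
      rw [h1, h2', hq1 _ h2s, zero_pow (by omega)]
      ring
  · intro hx
    have hx2 : x ^ 2 ≠ s ^ 2 := by rw [hs2]; exact hx
    rw [hN]
    have h1 : s + x ≠ 0 := fun h => hx2 (by linear_combination (x - s) * h)
    have h2' : s - x ≠ 0 := fun h => hx2 (by linear_combination -(x + s) * h)
    rw [hq1 _ h1, hq1 _ h2']
    ring
end
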